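/- arXiv:1610.06816 — 3 statements merged into one kernel-verified Lean document; each statement's English description precedes it below -/
import Mathlib

section
/- Let q and u be real numbers with q > 1 and |u| < q. Then the infinite product ∏_{r≥1} (1 - u q^{-r})^{-1} converges, the series on the right converges absolutely, and ∏_{r≥1} (1 - u q^{-r})^{-1} = 1 + Σ_{n≥1} u^n / ( q^n (1 - q^{-1})(1 - q^{-2}) ⋯ (1 - q^{-n}) ). -/
set_option maxHeartbeats 1000000


open Finset Filter Topology

namespace EulerAux

noncomputable def D (t : ℝ) (n : ℕ) : ℝ := ∏ i ∈ Finset.Icc 1 n, (1 - t ^ i)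

lemma fac_pos {t : ℝ} (ht0 : 0 < t) (ht1 : t < 1) {i : ℕ} (hi : 1 ≤ i) :
    0 < 1 - t ^ i := by
  have : t ^ i < 1 := pow_lt_one₀ ht0.le ht1 (by omega)
  linarith

lemma D_pos {t : ℝ} (ht0 : 0 < t) (ht1 : t < 1) (n : ℕ) : 0 < D t n :=
  Finset.prod_pos fun i hi => fac_pos ht0 ht1 (Finset.mem_Icc.mp hi).1

lemma D_zero {t : ℝ} : D t 0 = 1 := by simp [D]

lemma D_succ {t : ℝ} (n : ℕ) : D t (n + 1) = D t n * (1 - t ^ (n + 1)) :=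
  Finset.prod_Icc_succ_top (by omega) _

lemma summable_term {t : ℝ} (ht0 : 0 < t) (ht1 : t < 1) {y : ℝ} (hy : |y| < 1) :
    Summable (fun n : ℕ => y ^ n / D t n) := by
  have hy0 : 0 ≤ |y| := abs_nonneg y
  have hr : (1 + |y|) / 2 < 1 := by linarith
  apply summable_of_ratio_norm_eventually_le hr
  have hev : ∀ᶠ n : ℕ in atTop, t ^ (n + 1) < (1 - |y|) / (1 + |y|) := by
    have hlim : Tendsto (fun n : ℕ => t ^ (n + 1)) atTop (𝓝 0) := by
      have := tendsto_pow_atTop_nhds_zero_of_lt_one ht0.le ht1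
      exact this.comp (tendsto_add_atTop_nat 1)
    exact hlim.eventually_lt_const (div_pos (by linarith) (by linarith))
  filter_upwards [hev] with n hn
  have hD := D_pos ht0 ht1 n
  have h1 : 0 < 1 - t ^ (n + 1) := fac_pos ht0 ht1 (by omega)
  have key : |y| ≤ (1 + |y|) / 2 * (1 - t ^ (n + 1)) := by
    rw [lt_div_iff₀ (by positivity)] at hn
    nlinarith
  have hDs : D t (n + 1) = D t n * (1 - t ^ (n + 1)) := D_succ n
  rw [Real.norm_eq_abs, Real.norm_eq_abs, abs_div, abs_div, abs_pow, abs_pow,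
    abs_of_pos (D_pos ht0 ht1 (n + 1)), abs_of_pos hD, hDs]
  have e : |y| ^ (n + 1) / (D t n * (1 - t ^ (n + 1)))
      = (|y| / (1 - t ^ (n + 1))) * (|y| ^ n / D t n) := by
    rw [pow_succ]; field_simp
  rw [e]
  apply mul_le_mul_of_nonneg_right _ (by positivity)
  rw [div_le_iff₀ h1]
  exact key

noncomputable def T (t y : ℝ) : ℝ := ∑' n : ℕ, y ^ n / D t n

lemma T_eq {t : ℝ} (ht0 : 0 < t) (ht1 : t < 1) {y : ℝ} (hy : |y| < 1) :
    T t y = 1 + ∑' n : ℕ, y ^ (n + 1) / D t (n + 1) := by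
  rw [T, Summable.tsum_eq_zero_add (summable_term ht0 ht1 hy)]
  simp [D_zero]

lemma funct {t : ℝ} (ht0 : 0 < t) (ht1 : t < 1) {y : ℝ} (hy : |y| < 1) :
    T t (t * y) = (1 - y) * T t y := by
  have hty : |t * y| < 1 := by
    rw [abs_mul, abs_of_pos ht0]
    calc t * |y| ≤ 1 * |y| := by nlinarith [abs_nonneg y]
      _ = |y| := one_mul _
      _ < 1 := hy
  have hs := summable_term ht0 ht1 hy
  have hs1 : Summable (fun n : ℕ => y ^ (n + 1) / D t (n + 1)) :=
    (summable_nat_add_iff (f := fun n : ℕ => y ^ n / D t n) 1).mpr hs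
  have hs2 : Summable (fun n : ℕ => y ^ (n + 1) / D t n) := by
    have := hs.mul_left y
    apply this.congr
    intro n
    rw [pow_succ]; ring
  have e2 : y * T t y = ∑' n : ℕ, y ^ (n + 1) / D t n := by
    rw [T, ← tsum_mul_left]
    apply tsum_congr
    intro n
    rw [pow_succ]; ring
  have key : ∀ n : ℕ, y ^ (n + 1) / D t (n + 1) - y ^ (n + 1) / D t n
      = (t * y) ^ (n + 1) / D t (n + 1) := by
    intro n
    rw [D_succ]
    have hD := (D_pos ht0 ht1 n).ne'
    have h1 := (fac_pos ht0 ht1 (show 1 ≤ n + 1 by omega)).ne'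
    rw [mul_pow]
    field_simp
    ring
  have expand : (1 - y) * T t y
      = 1 + ((∑' n : ℕ, y ^ (n + 1) / D t (n + 1)) - ∑' n : ℕ, y ^ (n + 1) / D t n) := by
    rw [sub_mul, one_mul, e2, T_eq ht0 ht1 hy]; ring
  rw [T_eq ht0 ht1 hty, expand, ← Summable.tsum_sub hs1 hs2]
  congr 1
  exact (tsum_congr key).symm

lemma iterate {t : ℝ} (ht0 : 0 < t) (ht1 : t < 1) {y : ℝ} (hy : |y| < 1) (N : ℕ) :
    (∏ r ∈ Finset.range N, (1 - y * t ^ r)) * T t y = T t (y * t ^ N) := by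
  induction N with
  | zero => simp
  | succ N ih =>
    have hyN : |y * t ^ N| < 1 := by
      rw [abs_mul, abs_pow, abs_of_pos ht0]
      calc |y| * t ^ N ≤ |y| * 1 :=
            mul_le_mul_of_nonneg_left (pow_le_one₀ ht0.le ht1.le) (abs_nonneg y)
        _ = |y| := mul_one _
        _ < 1 := hy
    rw [Finset.prod_range_succ]
    calc (∏ r ∈ Finset.range N, (1 - y * t ^ r)) * (1 - y * t ^ N) * T t y
        = (1 - y * t ^ N) * ((∏ r ∈ Finset.range N, (1 - y * t ^ r)) * T t y) := by ring
      _ = (1 - y * t ^ N) * T t (y * t ^ N) := by rw [ih]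
      _ = T t (t * (y * t ^ N)) := (funct ht0 ht1 hyN).symm
      _ = T t (y * t ^ (N + 1)) := by congr 1; ring

lemma abs_yN_lt {t : ℝ} (ht0 : 0 < t) (ht1 : t < 1) {y : ℝ} (hy : |y| < 1) (N : ℕ) :
    |y * t ^ N| < 1 := by
  rw [abs_mul, abs_pow, abs_of_pos ht0]
  calc |y| * t ^ N ≤ |y| * 1 :=
        mul_le_mul_of_nonneg_left (pow_le_one₀ ht0.le ht1.le) (abs_nonneg y)
    _ = |y| := mul_one _
    _ < 1 := hy

lemma tendsto_T_one {t : ℝ} (ht0 : 0 < t) (ht1 : t < 1) {y : ℝ} (hy : |y| < 1) :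
    Tendsto (fun N : ℕ => T t (y * t ^ N)) atTop (𝓝 1) := by
  have habs : Summable (fun n : ℕ => |y ^ (n + 1) / D t (n + 1)|) :=
    summable_abs_iff.mpr ((summable_nat_add_iff (f := fun n : ℕ => y ^ n / D t n) 1).mpr
      (summable_term ht0 ht1 hy))
  set C : ℝ := ∑' n : ℕ, |y ^ (n + 1) / D t (n + 1)| with hCdef
  rw [← tendsto_sub_nhds_zero_iff]
  apply squeeze_zero_norm (a := fun N : ℕ => t ^ N * C)
  · intro N
    have hyN := abs_yN_lt ht0 ht1 hy N
    have habsN : Summable (fun n : ℕ => |(y * t ^ N) ^ (n + 1) / D t (n + 1)|) :=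
      summable_abs_iff.mpr ((summable_nat_add_iff (f := fun n : ℕ => (y * t ^ N) ^ n / D t n) 1).mpr
        (summable_term ht0 ht1 hyN))
    rw [T_eq ht0 ht1 hyN]
    rw [Real.norm_eq_abs, add_sub_cancel_left]
    calc |∑' n : ℕ, (y * t ^ N) ^ (n + 1) / D t (n + 1)|
        ≤ ∑' n : ℕ, |(y * t ^ N) ^ (n + 1) / D t (n + 1)| := by
          have := norm_tsum_le_tsum_norm
            (f := fun n : ℕ => (y * t ^ N) ^ (n + 1) / D t (n + 1))
            (by simpa only [Real.norm_eq_abs] using habsN)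
          simpa only [Real.norm_eq_abs] using this
      _ ≤ ∑' n : ℕ, |y ^ (n + 1) / D t (n + 1)| * t ^ N := by
          apply Summable.tsum_le_tsum _ habsN (habs.mul_right _)
          intro n
          have hDpos := D_pos ht0 ht1 (n + 1)
          have hpow : (t ^ N) ^ (n + 1) ≤ t ^ N := by
            rw [← pow_mul]
            exact pow_le_pow_of_le_one ht0.le ht1.le (Nat.le_mul_of_pos_right _ (by omega))
          rw [abs_div, abs_div, abs_pow, abs_pow, abs_mul, abs_pow, abs_of_pos ht0,
            abs_of_pos hDpos, mul_pow, div_mul_eq_mul_div]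
          gcongr
      _ = C * t ^ N := tsum_mul_right
      _ = t ^ N * C := mul_comm _ _
  · have := tendsto_pow_atTop_nhds_zero_of_lt_one ht0.le ht1
    simpa using this.mul_const C


lemma main {t x : ℝ} (ht0 : 0 < t) (ht1 : t < 1) (hx : |x| < 1) :
    Multipliable (fun r : ℕ => (1 - x * t ^ r)⁻¹) ∧
    Summable (fun n : ℕ => |x ^ (n + 1) / D t (n + 1)|) ∧
    (∏' r : ℕ, (1 - x * t ^ r)⁻¹) = 1 + ∑' n : ℕ, x ^ (n + 1) / D t (n + 1) := by
  have hposfac : ∀ r : ℕ, 0 < 1 - x * t ^ r := by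
    intro r
    have h := abs_yN_lt ht0 ht1 hx r
    have := (abs_lt.mp h).2
    linarith
  have hmult : Multipliable (fun r : ℕ => (1 - x * t ^ r)⁻¹) := by
    apply Real.multipliable_of_summable_log (fun r => inv_pos.mpr (hposfac r))
    have hlog : ∀ r : ℕ, |Real.log ((1 - x * t ^ r)⁻¹)| ≤ |x| / (1 - |x|) * t ^ r := by
      intro r
      have h1 := hposfac r
      have hc : 0 < 1 - |x| := by linarith
      have h3 : |x * t ^ r| ≤ |x| := by
        rw [abs_mul, abs_pow, abs_of_pos ht0]
        calc |x| * t ^ r ≤ |x| * 1 :=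
              mul_le_mul_of_nonneg_left (pow_le_one₀ ht0.le ht1.le) (abs_nonneg x)
          _ = |x| := mul_one _
      have hcz : 1 - |x| ≤ 1 - x * t ^ r := by
        have := le_abs_self (x * t ^ r)
        linarith
      rw [Real.log_inv, abs_neg]
      have hbound : |Real.log (1 - x * t ^ r)| ≤ |x * t ^ r| / (1 - |x|) := by
        rcases le_or_gt 1 (1 - x * t ^ r) with hge | hlt
        · rw [abs_of_nonneg (Real.log_nonneg hge)]
          have h7 := Real.log_le_sub_one_of_pos h1
          have h8 : -(x * t ^ r) ≤ |x * t ^ r| := neg_le_abs _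
          calc Real.log (1 - x * t ^ r) ≤ |x * t ^ r| := by linarith
            _ ≤ |x * t ^ r| / (1 - |x|) := by
                rw [le_div_iff₀ hc]
                nlinarith [abs_nonneg (x * t ^ r), abs_nonneg x]
        · have hlogneg : Real.log (1 - x * t ^ r) ≤ 0 :=
            Real.log_nonpos (by linarith) (by linarith)
          rw [abs_of_nonpos hlogneg, ← Real.log_inv]
          have hinvpos : 0 < (1 - x * t ^ r)⁻¹ := inv_pos.mpr h1
          calc Real.log (1 - x * t ^ r)⁻¹ ≤ (1 - x * t ^ r)⁻¹ - 1 :=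
                Real.log_le_sub_one_of_pos hinvpos
            _ = (1 - (1 - x * t ^ r)) / (1 - x * t ^ r) := by field_simp
            _ ≤ |x * t ^ r| / (1 - |x|) := by
                apply div_le_div₀ (abs_nonneg _) _ hc hcz
                simpa using le_abs_self (x * t ^ r)
      calc |Real.log (1 - x * t ^ r)| ≤ |x * t ^ r| / (1 - |x|) := hbound
        _ ≤ |x| / (1 - |x|) * t ^ r := by
            rw [abs_mul, abs_pow, abs_of_pos ht0]
            rw [div_mul_eq_mul_div]
    apply Summable.of_abs
    apply Summable.of_nonneg_of_le (fun r => abs_nonneg _) hlog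
    exact (summable_geometric_of_lt_one ht0.le ht1).mul_left _
  have hTx : T t x = ∏' r : ℕ, (1 - x * t ^ r)⁻¹ := by
    have hne : ∀ N : ℕ, (∏ r ∈ Finset.range N, (1 - x * t ^ r)) ≠ 0 :=
      fun N => Finset.prod_ne_zero_iff.mpr fun r _ => (hposfac r).ne'
    have heq : ∀ N : ℕ, (∏ r ∈ Finset.range N, (1 - x * t ^ r)⁻¹) * T t (x * t ^ N)
        = T t x := by
      intro N
      rw [Finset.prod_inv_distrib, ← iterate ht0 ht1 hx N]
      rw [← mul_assoc, inv_mul_cancel₀ (hne N), one_mul]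
    have hlim1 : Tendsto (fun N : ℕ => ∏ r ∈ Finset.range N, (1 - x * t ^ r)⁻¹)
        atTop (𝓝 (∏' r : ℕ, (1 - x * t ^ r)⁻¹)) := hmult.hasProd.tendsto_prod_nat
    have hlim2 := tendsto_T_one ht0 ht1 hx
    have hlim3 : Tendsto (fun N : ℕ =>
        (∏ r ∈ Finset.range N, (1 - x * t ^ r)⁻¹) * T t (x * t ^ N))
        atTop (𝓝 ((∏' r : ℕ, (1 - x * t ^ r)⁻¹) * 1)) := hlim1.mul hlim2
    have hlim4 : Tendsto (fun _ : ℕ => T t x) atTop (𝓝 (T t x)) :=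
      tendsto_const_nhds
    have := tendsto_nhds_unique ((tendsto_congr heq).mp hlim3) hlim4
    rw [← this, mul_one]
  refine ⟨hmult, ?_, ?_⟩
  · exact summable_abs_iff.mpr ((summable_nat_add_iff (f := fun n : ℕ => x ^ n / D t n) 1).mpr
      (summable_term ht0 ht1 hx))
  · rw [← hTx, T_eq ht0 ht1 hx]

end EulerAux

/-- **Lemma 3.3(ii) (Euler's identity)**: for real `q > 1` and `|u| < q`, the infinite
product `∏_{r≥1} (1-u q^{-r})^{-1}` converges, the series
`Σ_{n≥1} u^n/(q^n (1-q^{-1})⋯(1-q^{-n}))` converges absolutely, and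
`∏_{r≥1} (1-u q^{-r})^{-1} = 1 + Σ_{n≥1} u^n/(q^n (1-q^{-1})⋯(1-q^{-n}))`. -/
theorem euler_prod_eq_sum (q u : ℝ) (hq : 1 < q) (hu : |u| < q) :
    Multipliable (fun r : ℕ => (1 - u / q ^ (r + 1))⁻¹) ∧
    Summable (fun n : ℕ =>
      |u ^ (n + 1) / (q ^ (n + 1) * ∏ i ∈ Finset.Icc 1 (n + 1), (1 - 1 / q ^ i))|) ∧
    (∏' r : ℕ, (1 - u / q ^ (r + 1))⁻¹)
      = 1 + ∑' n : ℕ,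
          u ^ (n + 1) / (q ^ (n + 1) * ∏ i ∈ Finset.Icc 1 (n + 1), (1 - 1 / q ^ i)) := by
  have hq0 : (0 : ℝ) < q := lt_trans one_pos hq
  have ht0 : 0 < 1 / q := by positivity
  have ht1 : 1 / q < 1 := by rw [div_lt_one hq0]; exact hq
  have hx : |u / q| < 1 := by
    rw [abs_div, abs_of_pos hq0, div_lt_one hq0]; exact hu
  obtain ⟨hm, hs, he⟩ := EulerAux.main ht0 ht1 hx
  have hfactor : ∀ r : ℕ, u / q ^ (r + 1) = u / q * (1 / q) ^ r := by
    intro r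
    rw [div_pow, one_pow, div_mul_div_comm, mul_one, ← pow_succ']
  have hterm : ∀ n : ℕ,
      u ^ (n + 1) / (q ^ (n + 1) * ∏ i ∈ Finset.Icc 1 (n + 1), (1 - 1 / q ^ i))
        = (u / q) ^ (n + 1) / EulerAux.D (1 / q) (n + 1) := by
    intro n
    have hD : ∏ i ∈ Finset.Icc 1 (n + 1), (1 - 1 / q ^ i) = EulerAux.D (1 / q) (n + 1) := by
      apply Finset.prod_congr rfl
      intro i _
      rw [div_pow, one_pow]
    rw [hD, div_pow, div_div]
  refine ⟨?_, ?_, ?_⟩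
  · have hfun : (fun r : ℕ => (1 - u / q ^ (r + 1))⁻¹)
        = fun r : ℕ => (1 - u / q * (1 / q) ^ r)⁻¹ := by
      funext r; rw [hfactor r]
    rw [hfun]
    exact hm
  · apply hs.congr
    intro n
    rw [hterm n]
  · have hp : (∏' r : ℕ, (1 - u / q ^ (r + 1))⁻¹)
        = ∏' r : ℕ, (1 - u / q * (1 / q) ^ r)⁻¹ := by
      apply tprod_congr
      intro r; rw [hfactor r]
    rw [hp, he]
    congr 1
    apply tsum_congr
    intro n
    exact (hterm n).symm
end

section
/- Fix a double partition (μ,λ). For a real number z with |z| < 1 and n ≥ 0, let f_n(z) := Σ over double partitions (ν,κ) of n of binom(ν,μ)·binom(κ,λ)/(v_ν v_κ) · ∏_{r≥1} (1-z^r)^{-n_r(ν)} (1+z^r)^{-n_r(κ)} (a finite sum of real numbers; all factors 1±z^r are positive). Then for every real z with |z| ≤ 1/2 and every n ≥ 1, f_{n-1}(z) ≤ f_n(z); i.e. the sequence (f_n(z))_{n≥0} is monotone nondecreasing. -/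
open Finset

/-- `v_μ = ∏_{r≥1} n_r(μ)! · (2r)^{n_r(μ)}`. -/
def vOf (mu : Multiset ℕ) : ℕ :=
  ∏ r ∈ mu.toFinset, Nat.factorial (mu.count r) * (2 * r) ^ (mu.count r)

/-- `binom(ν,μ) = ∏_{r≥1} C(n_r(ν), n_r(μ))`. -/
def binomOf (nu mu : Multiset ℕ) : ℕ :=
  ∏ r ∈ mu.toFinset, Nat.choose (nu.count r) (mu.count r)

/-- `f_n(z) = Σ_{(ν,κ) ⊢ n} binom(ν,μ)binom(κ,λ)/(v_ν v_κ) ·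
∏_{r≥1} (1-z^r)^{-n_r(ν)} (1+z^r)^{-n_r(κ)}`, a finite sum of real numbers; the sum over
double partitions of `n` is realized as a sum over `k ≤ n`, `ν ⊢ k`, `κ ⊢ n - k`. -/
noncomputable def fEval (muP lamP : Multiset ℕ) (n : ℕ) (z : ℝ) : ℝ :=
  ∑ k ∈ Finset.range (n + 1), ∑ nu : Nat.Partition k, ∑ ka : Nat.Partition (n - k),
    ((binomOf nu.parts muP : ℝ) * (binomOf ka.parts lamP : ℝ)) /
        ((vOf nu.parts : ℝ) * (vOf ka.parts : ℝ)) *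
      (∏ r ∈ nu.parts.toFinset, ((1 - z ^ r)⁻¹) ^ (nu.parts.count r)) *
      (∏ r ∈ ka.parts.toFinset, ((1 + z ^ r)⁻¹) ^ (ka.parts.count r))

/-! ### Auxiliary development

We show that `fEval μ λ n z = C(z) · Σ_{j ≤ n-A-B} E_j(z)` where the `E_j(z)` are
nonnegative, via an "exponential recurrence" characterization of partition-weighted sums. -/

noncomputable section FEvalAux

/-- Weight of a multiset with respect to a coefficient function:
`∏_r c_r^{n_r}/n_r!`. -/
def wgt (c : ℕ → ℝ) (s : Multiset ℕ) : ℝ :=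
  ∏ r ∈ s.toFinset, c r ^ s.count r / (Nat.factorial (s.count r) : ℝ)

/-- Partition-sum sequence: `H_m = Σ_{π ⊢ m} ∏_r c_r^{n_r}/n_r!`. -/
def Hseq (c : ℕ → ℝ) (m : ℕ) : ℝ := ∑ π : Nat.Partition m, wgt c π.parts

lemma wgt_eq_prod (c : ℕ → ℝ) (s : Multiset ℕ) {T : Finset ℕ} (hT : s.toFinset ⊆ T) :
    wgt c s = ∏ r ∈ T, c r ^ s.count r / (Nat.factorial (s.count r) : ℝ) := by
  rw [wgt]
  apply Finset.prod_subset hT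
  intro x _ hx
  have : s.count x = 0 := by
    rw [Multiset.count_eq_zero]
    intro h
    exact hx (Multiset.mem_toFinset.2 h)
  simp [this]

lemma wgt_nonneg {c : ℕ → ℝ} (hc : ∀ r, 0 ≤ c r) (s : Multiset ℕ) : 0 ≤ wgt c s := by
  apply Finset.prod_nonneg
  intro r _
  exact div_nonneg (pow_nonneg (hc r) _) (Nat.cast_nonneg _)

lemma Hseq_nonneg {c : ℕ → ℝ} (hc : ∀ r, 0 ≤ c r) (m : ℕ) : 0 ≤ Hseq c m :=
  Finset.sum_nonneg fun π _ => wgt_nonneg hc π.parts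

lemma Hseq_zero (c : ℕ → ℝ) : Hseq c 0 = 1 := by
  rw [Hseq, Fintype.sum_unique]
  have : (default : Nat.Partition 0).parts = 0 := rfl
  simp [wgt, this]

/-! #### The exponential recurrence -/

/-- The series `Σ r γ_r x^r`. -/
def Tser (γ : ℕ → ℝ) : PowerSeries ℝ := PowerSeries.mk fun r => (r : ℝ) * γ r

/-- The exponential-type recurrence `m A_m = Σ_{r≤m} r γ_r A_{m-r}` with `A_0 = 1`. -/
def RecSeq (A γ : ℕ → ℝ) : Prop :=
  A 0 = 1 ∧ ∀ m : ℕ, (m : ℝ) * A m = ∑ r ∈ Finset.range (m + 1), (r : ℝ) * γ r * A (m - r)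

lemma coeff_Tser_mul (γ A : ℕ → ℝ) (m : ℕ) :
    PowerSeries.coeff m (Tser γ * PowerSeries.mk A)
      = ∑ r ∈ Finset.range (m + 1), (r : ℝ) * γ r * A (m - r) := by
  rw [PowerSeries.coeff_mul, Finset.Nat.sum_antidiagonal_eq_sum_range_succ
      (fun i j => PowerSeries.coeff i (Tser γ) * PowerSeries.coeff j (PowerSeries.mk A))]
  simp [Tser, PowerSeries.coeff_mk, mul_assoc]

/-- The θ operator: `θ f = Σ m f_m x^m`. -/
def theta (f : PowerSeries ℝ) : PowerSeries ℝ :=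
  PowerSeries.mk fun m => (m : ℝ) * PowerSeries.coeff m f

lemma theta_mk (A : ℕ → ℝ) :
    theta (PowerSeries.mk A) = PowerSeries.mk fun m => (m : ℝ) * A m := by
  simp [theta]

lemma theta_eq (f : PowerSeries ℝ) :
    theta f = PowerSeries.X * PowerSeries.derivativeFun f := by
  ext m
  cases m with
  | zero => simp [theta, PowerSeries.coeff_zero_X_mul]
  | succ k =>
    rw [PowerSeries.coeff_succ_X_mul, show f.derivativeFun = PowerSeries.derivative ℝ f from rfl,
      PowerSeries.coeff_derivative]
    simp only [theta, PowerSeries.coeff_mk]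
    push_cast
    ring

lemma theta_mul (f g : PowerSeries ℝ) : theta (f * g) = theta f * g + f * theta g := by
  rw [theta_eq, theta_eq, theta_eq, PowerSeries.derivativeFun_mul]
  simp only [smul_eq_mul]
  ring

lemma recSeq_iff (A γ : ℕ → ℝ) : RecSeq A γ ↔ (A 0 = 1 ∧
    theta (PowerSeries.mk A) = Tser γ * PowerSeries.mk A) := by
  unfold RecSeq
  refine and_congr_right fun _ => ?_
  rw [theta_mk]
  constructor
  · intro h
    ext m
    rw [PowerSeries.coeff_mk, coeff_Tser_mul]
    exact h m
  · intro h m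
    rw [← coeff_Tser_mul, ← h, PowerSeries.coeff_mk]

lemma recSeq_unique {A B γ : ℕ → ℝ} (hA : RecSeq A γ) (hB : RecSeq B γ) : ∀ m, A m = B m := by
  intro m
  induction m using Nat.strong_induction_on with
  | _ m ih =>
    cases m with
    | zero => rw [hA.1, hB.1]
    | succ k =>
      have h1 := hA.2 (k + 1)
      have h2 := hB.2 (k + 1)
      have heq : ∑ r ∈ Finset.range (k + 2), (r : ℝ) * γ r * A (k + 1 - r)
          = ∑ r ∈ Finset.range (k + 2), (r : ℝ) * γ r * B (k + 1 - r) := by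
        refine Finset.sum_congr rfl fun r _ => ?_
        rcases Nat.eq_zero_or_pos r with h0 | h0
        · simp [h0]
        · rw [ih (k + 1 - r) (by omega)]
      have hk : ((k + 1 : ℕ) : ℝ) ≠ 0 := Nat.cast_ne_zero.2 k.succ_ne_zero
      exact mul_left_cancel₀ hk (h1.trans (heq.trans h2.symm))

lemma recSeq_mul {A B α β : ℕ → ℝ} (hA : RecSeq A α) (hB : RecSeq B β) :
    RecSeq (fun m => ∑ k ∈ Finset.range (m + 1), A k * B (m - k)) (fun r => α r + β r) := by
  have hA' := ((recSeq_iff A α).1 hA).2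
  have hB' := ((recSeq_iff B β).1 hB).2
  rw [recSeq_iff]
  have hmk : (PowerSeries.mk fun m => ∑ k ∈ Finset.range (m + 1), A k * B (m - k))
      = PowerSeries.mk A * PowerSeries.mk B := by
    ext m
    rw [PowerSeries.coeff_mk, PowerSeries.coeff_mul, Finset.Nat.sum_antidiagonal_eq_sum_range_succ
      (fun i j => PowerSeries.coeff i (PowerSeries.mk A) *
        PowerSeries.coeff j (PowerSeries.mk B))]
    simp
  have hT : Tser (fun r => α r + β r) = Tser α + Tser β := by
    ext m
    simp [Tser, mul_add]
  refine ⟨by simp [hA.1, hB.1], ?_⟩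
  rw [hmk, theta_mul, hA', hB', hT]
  ring

lemma recSeq_one : RecSeq (fun _ => (1 : ℝ)) (fun r => (r : ℝ)⁻¹) := by
  refine ⟨rfl, fun m => ?_⟩
  rw [Finset.sum_range_succ']
  have h1 : ∀ i : ℕ, ((i + 1 : ℕ) : ℝ) * ((i + 1 : ℕ) : ℝ)⁻¹ * 1 = 1 := by
    intro i
    rw [mul_one, mul_inv_cancel₀ (Nat.cast_ne_zero.2 i.succ_ne_zero)]
  simp only [h1]
  simp

lemma recSeq_partial {E δ : ℕ → ℝ} (hE : RecSeq E δ) :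
    RecSeq (fun m => ∑ i ∈ Finset.range (m + 1), E i) (fun r => (r : ℝ)⁻¹ + δ r) := by
  have h := recSeq_mul recSeq_one hE
  have hfun : (fun m => ∑ k ∈ Finset.range (m + 1), (1 : ℝ) * E (m - k))
      = fun m => ∑ i ∈ Finset.range (m + 1), E i := by
    funext m
    simp only [one_mul]
    have := Finset.sum_range_reflect E (m + 1)
    simpa using this
  rw [← hfun]
  exact h

/-! #### The partition sums satisfy the recurrence -/

lemma count_mul_wgt (c : ℕ → ℝ) {s : Multiset ℕ} {r : ℕ} (hr : r ∈ s) :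
    (s.count r : ℝ) * wgt c s = c r * wgt c (s.erase r) := by
  have hsub : (s.erase r).toFinset ⊆ s.toFinset := by
    intro x hx
    rw [Multiset.mem_toFinset] at *
    exact Multiset.mem_of_mem_erase hx
  have hrT : r ∈ s.toFinset := Multiset.mem_toFinset.2 hr
  rw [wgt, wgt_eq_prod c (s.erase r) hsub, ← Finset.mul_prod_erase _ _ hrT,
    ← Finset.mul_prod_erase _ (fun x => c x ^ (s.erase r).count x /
      (Nat.factorial ((s.erase r).count x) : ℝ)) hrT]
  have hcount : ∀ x ∈ s.toFinset.erase r,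
      c x ^ (s.erase r).count x / (Nat.factorial ((s.erase r).count x) : ℝ)
        = c x ^ s.count x / (Nat.factorial (s.count x) : ℝ) := by
    intro x hx
    rw [Multiset.count_erase_of_ne (Finset.mem_erase.1 hx).1]
  rw [Finset.prod_congr rfl hcount, Multiset.count_erase_self]
  obtain ⟨k, hk⟩ : ∃ k, s.count r = k + 1 :=
    ⟨s.count r - 1, by have := Multiset.count_pos.2 hr; omega⟩
  rw [hk]
  simp only [Nat.add_sub_cancel]
  have hfac : (Nat.factorial (k + 1) : ℝ) = (k + 1 : ℝ) * (Nat.factorial k : ℝ) := by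
    rw [Nat.factorial_succ]
    push_cast
    ring
  have hfk : (Nat.factorial k : ℝ) ≠ 0 := Nat.cast_ne_zero.2 (Nat.factorial_ne_zero k)
  have hk1 : ((k : ℝ) + 1) ≠ 0 := by positivity
  rw [hfac, pow_succ]
  push_cast
  field_simp
  done

lemma sum_filter_mem_erase (c : ℕ → ℝ) {m r : ℕ} (hr1 : 1 ≤ r) (hrm : r ≤ m) :
    ∑ π ∈ Finset.univ.filter (fun π : Nat.Partition m => r ∈ π.parts),
      wgt c (π.parts.erase r) = Hseq c (m - r) := by
  rw [Hseq]
  have isum : ∀ π : Nat.Partition m, r ∈ π.parts → (π.parts.erase r).sum = m - r := by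
    intro π hπ'
    have h1 : (r ::ₘ π.parts.erase r).sum = π.parts.sum := by
      rw [Multiset.cons_erase hπ']
    rw [Multiset.sum_cons, π.parts_sum] at h1
    omega
  refine Finset.sum_bij'
    (i := fun (π : Nat.Partition m) (hπ : π ∈ Finset.univ.filter
        (fun π : Nat.Partition m => r ∈ π.parts)) =>
      (⟨π.parts.erase r, fun hi => π.parts_pos (Multiset.mem_of_mem_erase hi),
        isum π (Finset.mem_filter.1 hπ).2⟩ : Nat.Partition (m - r)))
    (j := fun (ρ : Nat.Partition (m - r)) _ =>
      (⟨r ::ₘ ρ.parts, fun hi => by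
          rcases Multiset.mem_cons.1 hi with h | h
          · omega
          · exact ρ.parts_pos h,
        by rw [Multiset.sum_cons, ρ.parts_sum]; omega⟩ : Nat.Partition m))
    (fun a _ => Finset.mem_univ _)
    (fun ρ _ => Finset.mem_filter.2 ⟨Finset.mem_univ _, Multiset.mem_cons_self _ _⟩)
    (fun π hπ => Nat.Partition.ext (Multiset.cons_erase (Finset.mem_filter.1 hπ).2))
    (fun ρ _ => Nat.Partition.ext (Multiset.erase_cons_head _ _))
    (fun π _ => rfl)

lemma recSeq_Hseq (c : ℕ → ℝ) : RecSeq (Hseq c) c := by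
  refine ⟨Hseq_zero c, fun m => ?_⟩
  rw [Hseq, Finset.mul_sum]
  have step1 : ∀ π : Nat.Partition m, (m : ℝ) * wgt c π.parts
      = ∑ r ∈ Finset.range (m + 1), (r : ℝ) * (π.parts.count r : ℝ) * wgt c π.parts := by
    intro π
    rw [← Finset.sum_mul]
    congr 1
    have hsub : π.parts.toFinset ⊆ Finset.range (m + 1) := by
      intro x hx
      rw [Multiset.mem_toFinset] at hx
      have hle : x ≤ π.parts.sum :=
        Multiset.single_le_sum (fun y _ => Nat.zero_le y) x hx
      rw [π.parts_sum] at hle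
      exact Finset.mem_range.2 (by omega)
    have hnat : ∑ r ∈ Finset.range (m + 1), r * π.parts.count r = m := by
      rw [← Finset.sum_subset hsub (fun x _ hx => by
        have : π.parts.count x = 0 := by
          rw [Multiset.count_eq_zero]
          intro h
          exact hx (Multiset.mem_toFinset.2 h)
        simp [this])]
      have h2 := Finset.sum_multiset_map_count π.parts (id : ℕ → ℕ)
      rw [Multiset.map_id, π.parts_sum] at h2
      conv_rhs => rw [h2]
      refine Finset.sum_congr rfl fun x _ => ?_
      simp [mul_comm]
    calc (m : ℝ) = ((∑ r ∈ Finset.range (m + 1), r * π.parts.count r : ℕ) : ℝ) := by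
          rw [hnat]
      _ = ∑ r ∈ Finset.range (m + 1), (r : ℝ) * (π.parts.count r : ℝ) := by
          push_cast; ring_nf
  rw [Finset.sum_congr rfl fun π _ => step1 π, Finset.sum_comm]
  refine Finset.sum_congr rfl fun r hr => ?_
  rcases Nat.eq_zero_or_pos r with h0 | h0
  · subst h0
    simp
  · have hrm : r ≤ m := by
      have := Finset.mem_range.1 hr
      omega
    have hterm : ∀ π : Nat.Partition m, π ∈ Finset.univ.filter
        (fun π : Nat.Partition m => r ∈ π.parts) →
        (r : ℝ) * (π.parts.count r : ℝ) * wgt c π.parts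
          = ((r : ℝ) * c r) * wgt c (π.parts.erase r) := by
      intro π hπ
      rw [mul_assoc, count_mul_wgt c (Finset.mem_filter.1 hπ).2, mul_assoc]
    rw [← Finset.sum_filter_of_ne (p := fun π : Nat.Partition m => r ∈ π.parts)
      (fun π _ hne => by
        by_contra hmem
        apply hne
        have : π.parts.count r = 0 := Multiset.count_eq_zero.2 hmem
        simp [this]),
      Finset.sum_congr rfl hterm, ← Finset.mul_sum,
      sum_filter_mem_erase c h0 hrm, mul_assoc]

/-! #### Factorization of the per-partition term -/

/-- coefficient function `c_r = 1/((2r)·u_r)`. -/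
def cf (u : ℕ → ℝ) (r : ℕ) : ℝ := ((2 * (r : ℝ)) * u r)⁻¹

/-- the per-partition term appearing in `fEval`. -/
def genTerm (u : ℕ → ℝ) (mu s : Multiset ℕ) : ℝ :=
  (binomOf s mu : ℝ) / (vOf s : ℝ) * ∏ r ∈ s.toFinset, ((u r)⁻¹) ^ s.count r

lemma genTerm_of_not_le {u : ℕ → ℝ} {mu s : Multiset ℕ} (h : ¬ mu ≤ s) :
    genTerm u mu s = 0 := by
  rw [Multiset.le_iff_count] at h
  push_neg at h
  obtain ⟨r, hr⟩ := h
  have hmem : r ∈ mu.toFinset := Multiset.mem_toFinset.2 (Multiset.count_pos.1 (by omega))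
  have : binomOf s mu = 0 := by
    rw [binomOf]
    exact Finset.prod_eq_zero hmem (Nat.choose_eq_zero_of_lt (by omega))
  rw [genTerm, this]
  simp

lemma factor_eq {u c : ℝ} (hu : u ≠ 0) (h2r : c ≠ 0) {a b : ℕ} (hba : b ≤ a) :
    (Nat.choose a b : ℝ) / ((Nat.factorial a : ℝ) * c ^ a) * (u⁻¹) ^ a
      = ((c * u)⁻¹ ^ b / (Nat.factorial b : ℝ)) *
        ((c * u)⁻¹ ^ (a - b) / (Nat.factorial (a - b) : ℝ)) := by
  have hfa : (Nat.factorial a : ℝ) ≠ 0 := Nat.cast_ne_zero.2 (Nat.factorial_ne_zero a)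
  have hfb : (Nat.factorial b : ℝ) ≠ 0 := Nat.cast_ne_zero.2 (Nat.factorial_ne_zero b)
  have hfab : (Nat.factorial (a - b) : ℝ) ≠ 0 := Nat.cast_ne_zero.2 (Nat.factorial_ne_zero _)
  have h1 : (c * u)⁻¹ ^ b / (Nat.factorial b : ℝ) *
      ((c * u)⁻¹ ^ (a - b) / (Nat.factorial (a - b) : ℝ))
      = (c * u)⁻¹ ^ a / ((Nat.factorial b : ℝ) * (Nat.factorial (a - b) : ℝ)) := by
    rw [div_mul_div_comm, ← pow_add, Nat.add_sub_cancel' hba]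
  have h2 : (c * u)⁻¹ ^ a = (c ^ a)⁻¹ * (u⁻¹) ^ a := by
    rw [mul_inv, mul_pow, inv_pow]
  rw [Nat.cast_choose ℝ hba, h1, h2]
  have hca : (c : ℝ) ^ a ≠ 0 := pow_ne_zero _ h2r
  field_simp

lemma genTerm_eq {u : ℕ → ℝ} (hu : ∀ r, 1 ≤ r → u r ≠ 0) {mu s : Multiset ℕ}
    (hle : mu ≤ s) (hpos : ∀ i ∈ s, 0 < i) :
    genTerm u mu s = wgt (cf u) mu * wgt (cf u) (s - mu) := by
  have hsubT : mu.toFinset ⊆ s.toFinset := by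
    intro x hx
    rw [Multiset.mem_toFinset] at *
    exact Multiset.mem_of_le hle hx
  have hsub2 : (s - mu).toFinset ⊆ s.toFinset := by
    intro x hx
    rw [Multiset.mem_toFinset] at *
    exact Multiset.mem_of_le (tsub_le_self) hx
  have hbin : (binomOf s mu : ℝ)
      = ∏ r ∈ s.toFinset, (Nat.choose (s.count r) (mu.count r) : ℝ) := by
    rw [binomOf, Nat.cast_prod]
    apply Finset.prod_subset hsubT
    intro x _ hx
    have : mu.count x = 0 := by
      rw [Multiset.count_eq_zero]
      intro h
      exact hx (Multiset.mem_toFinset.2 h)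
    simp [this]
  have hv : (vOf s : ℝ) = ∏ r ∈ s.toFinset,
      (Nat.factorial (s.count r) : ℝ) * ((2 * (r : ℝ)) ^ s.count r) := by
    rw [vOf, Nat.cast_prod]
    refine Finset.prod_congr rfl fun x _ => ?_
    push_cast
    ring
  rw [genTerm, hbin, hv, ← Finset.prod_div_distrib, ← Finset.prod_mul_distrib]
  have hstep : ∀ r ∈ s.toFinset,
      (Nat.choose (s.count r) (mu.count r) : ℝ) /
          ((Nat.factorial (s.count r) : ℝ) * (2 * (r : ℝ)) ^ s.count r) *
        ((u r)⁻¹) ^ s.count r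
      = (cf u r ^ mu.count r / (Nat.factorial (mu.count r) : ℝ)) *
        (cf u r ^ (s.count r - mu.count r) /
          (Nat.factorial (s.count r - mu.count r) : ℝ)) := by
    intro r hr
    have hr1 : 1 ≤ r := hpos r (Multiset.mem_toFinset.1 hr)
    have h2r : (2 * (r : ℝ)) ≠ 0 := by
      have : (r : ℝ) ≠ 0 := Nat.cast_ne_zero.2 (by omega)
      positivity
    have hba : mu.count r ≤ s.count r := Multiset.le_iff_count.1 hle r
    have := factor_eq (hu r hr1) h2r hba
    rw [cf]
    exact this
  rw [Finset.prod_congr rfl hstep, Finset.prod_mul_distrib]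
  congr 1
  · rw [wgt_eq_prod (cf u) mu hsubT]
  · rw [wgt_eq_prod (cf u) (s - mu) hsub2]
    refine Finset.prod_congr rfl fun r _ => ?_
    rw [Multiset.count_sub]

lemma sum_genTerm {u : ℕ → ℝ} (hu : ∀ r, 1 ≤ r → u r ≠ 0) {A : ℕ} (mu : Nat.Partition A)
    (k : ℕ) :
    ∑ ν : Nat.Partition k, genTerm u mu.parts ν.parts
      = if A ≤ k then wgt (cf u) mu.parts * Hseq (cf u) (k - A) else 0 := by
  have hsumle : ∀ ν : Nat.Partition k, mu.parts ≤ ν.parts → A ≤ k := by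
    intro ν h
    obtain ⟨t, ht⟩ := Multiset.le_iff_exists_add.1 h
    have : ν.parts.sum = mu.parts.sum + t.sum := by rw [ht, Multiset.sum_add]
    rw [ν.parts_sum, mu.parts_sum] at this
    omega
  by_cases hAk : A ≤ k
  · rw [if_pos hAk]
    rw [← Finset.sum_filter_of_ne (p := fun ν : Nat.Partition k => mu.parts ≤ ν.parts)
      (fun ν _ hne => by
        by_contra hmem
        exact hne (genTerm_of_not_le hmem))]
    have hterm : ∀ ν : Nat.Partition k, ν ∈ Finset.univ.filter
        (fun ν : Nat.Partition k => mu.parts ≤ ν.parts) →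
        genTerm u mu.parts ν.parts
          = wgt (cf u) mu.parts * wgt (cf u) (ν.parts - mu.parts) := by
      intro ν hν
      exact genTerm_eq hu (Finset.mem_filter.1 hν).2 (fun i hi => ν.parts_pos hi)
    rw [Finset.sum_congr rfl hterm, ← Finset.mul_sum]
    congr 1
    rw [Hseq]
    have isum : ∀ ν : Nat.Partition k, mu.parts ≤ ν.parts →
        (ν.parts - mu.parts).sum = k - A := by
      intro ν h
      have h1 : mu.parts + (ν.parts - mu.parts) = ν.parts := add_tsub_cancel_of_le h
      have h2 : (mu.parts + (ν.parts - mu.parts)).sum = ν.parts.sum := by rw [h1]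
      rw [Multiset.sum_add, ν.parts_sum, mu.parts_sum] at h2
      omega
    refine Finset.sum_bij'
      (i := fun (ν : Nat.Partition k) (hν : ν ∈ Finset.univ.filter
          (fun ν : Nat.Partition k => mu.parts ≤ ν.parts)) =>
        (⟨ν.parts - mu.parts,
          fun hi => ν.parts_pos (Multiset.mem_of_le tsub_le_self hi),
          isum ν (Finset.mem_filter.1 hν).2⟩ : Nat.Partition (k - A)))
      (j := fun (ρ : Nat.Partition (k - A)) _ =>
        (⟨ρ.parts + mu.parts,
          fun hi => by
            rcases Multiset.mem_add.1 hi with h | h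
            · exact ρ.parts_pos h
            · exact mu.parts_pos h,
          by rw [Multiset.sum_add, ρ.parts_sum, mu.parts_sum]; omega⟩ : Nat.Partition k))
      (fun a _ => Finset.mem_univ _)
      (fun ρ _ => Finset.mem_filter.2 ⟨Finset.mem_univ _, Multiset.le_add_left _ _⟩)
      (fun ν hν => Nat.Partition.ext (by
        simp only []
        rw [tsub_add_cancel_of_le (Finset.mem_filter.1 hν).2]))
      (fun ρ _ => Nat.Partition.ext (by
        simp only []
        rw [add_tsub_cancel_right]))
      (fun ν _ => rfl)
  · rw [if_neg hAk]
    refine Finset.sum_eq_zero fun ν _ => ?_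
    apply genTerm_of_not_le
    intro h
    exact hAk (hsumle ν h)

/-! #### Reindexing of the outer sum -/

lemma sum_if_shift (g h : ℕ → ℝ) (A B n : ℕ) :
    ∑ k ∈ Finset.range (n + 1),
      (if A ≤ k then g (k - A) else 0) * (if B ≤ n - k then h (n - k - B) else 0)
      = if A + B ≤ n then
          ∑ j ∈ Finset.range (n - A - B + 1), g j * h (n - A - B - j) else 0 := by
  by_cases hn : A + B ≤ n
  · rw [if_pos hn]
    set M := n - A - B with hM
    have himg : ∑ k ∈ (Finset.range (M + 1)).image (· + A),
        (if A ≤ k then g (k - A) else 0) * (if B ≤ n - k then h (n - k - B) else 0)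
        = ∑ j ∈ Finset.range (M + 1), g j * h (M - j) := by
      rw [Finset.sum_image (fun a _ b _ hab => by omega)]
      refine Finset.sum_congr rfl fun j hj => ?_
      have hjM : j ≤ M := by
        have := Finset.mem_range.1 hj
        omega
      rw [if_pos (by omega : A ≤ j + A), if_pos (by omega : B ≤ n - (j + A))]
      congr 2
      · omega
      · omega
    rw [← himg]
    apply (Finset.sum_subset ?_ ?_).symm
    · intro x hx
      obtain ⟨j, hj, rfl⟩ := Finset.mem_image.1 hx
      have := Finset.mem_range.1 hj
      exact Finset.mem_range.2 (by omega)
    · intro k hk hknot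
      have hkn : k ≤ n := by
        have := Finset.mem_range.1 hk
        omega
      have : ¬ (A ≤ k ∧ k ≤ A + M) := by
        intro ⟨h1, h2⟩
        exact hknot (Finset.mem_image.2 ⟨k - A, Finset.mem_range.2 (by omega), by omega⟩)
      by_cases hA : A ≤ k
      · have : ¬ B ≤ n - k := by omega
        rw [if_neg this, mul_zero]
      · rw [if_neg hA, zero_mul]
  · rw [if_neg hn]
    refine Finset.sum_eq_zero fun k hk => ?_
    have hkn : k ≤ n := by
      have := Finset.mem_range.1 hk
      omega
    by_cases hA : A ≤ k
    · have : ¬ B ≤ n - k := by omega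
      rw [if_neg this, mul_zero]
    · rw [if_neg hA, zero_mul]

/-! #### Rewriting `fEval` -/

lemma fEval_eq_sum (muP lamP : Multiset ℕ) (n : ℕ) (z : ℝ) :
    fEval muP lamP n z = ∑ k ∈ Finset.range (n + 1),
      (∑ ν : Nat.Partition k, genTerm (fun r => 1 - z ^ r) muP ν.parts) *
      (∑ κ : Nat.Partition (n - k), genTerm (fun r => 1 + z ^ r) lamP κ.parts) := by
  rw [fEval]
  refine Finset.sum_congr rfl fun k _ => ?_
  rw [Finset.sum_mul_sum]
  refine Finset.sum_congr rfl fun ν _ => Finset.sum_congr rfl fun κ _ => ?_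
  rw [genTerm, genTerm]
  simp only [div_eq_mul_inv, mul_inv]
  ring

end FEvalAux

/-- The monotonicity step in the proof of Corollary 1.11: for a fixed double partition
`(μ,λ)` and any real `z` with `|z| ≤ 1/2`, the sequence `n ↦ f_n(z)` is monotone
nondecreasing, i.e. `f_{n-1}(z) ≤ f_n(z)` for all `n ≥ 1`. -/
theorem fEval_monotone (A B : ℕ) (mu : Nat.Partition A) (lam : Nat.Partition B)
    (z : ℝ) (hz : |z| ≤ 1 / 2) :
    ∀ n : ℕ, 1 ≤ n → fEval mu.parts lam.parts (n - 1) z ≤ fEval mu.parts lam.parts n z := by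
  -- basic estimates
  have habs : ∀ r : ℕ, 1 ≤ r → |z ^ r| ≤ 1 / 2 := by
    intro r hr
    rw [abs_pow]
    calc |z| ^ r ≤ (1 / 2 : ℝ) ^ r := pow_le_pow_left₀ (abs_nonneg z) hz r
      _ ≤ (1 / 2 : ℝ) ^ 1 := pow_le_pow_of_le_one (by norm_num) (by norm_num) hr
      _ = 1 / 2 := pow_one _
  have hu1 : ∀ r : ℕ, 1 ≤ r → (0 : ℝ) < 1 - z ^ r := by
    intro r hr
    have := abs_le.1 (habs r hr)
    linarith [this.2]
  have hu2 : ∀ r : ℕ, 1 ≤ r → (0 : ℝ) < 1 + z ^ r := by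
    intro r hr
    have := abs_le.1 (habs r hr)
    linarith [this.1]
  set u1 : ℕ → ℝ := fun r => 1 - z ^ r with hu1def
  set u2 : ℕ → ℝ := fun r => 1 + z ^ r with hu2def
  have hu1ne : ∀ r, 1 ≤ r → u1 r ≠ 0 := fun r hr => ne_of_gt (hu1 r hr)
  have hu2ne : ∀ r, 1 ≤ r → u2 r ≠ 0 := fun r hr => ne_of_gt (hu2 r hr)
  have hcf1 : ∀ r, 0 ≤ cf u1 r := by
    intro r
    rcases Nat.eq_zero_or_pos r with h0 | h0
    · subst h0; simp [cf]
    · have hr : (0 : ℝ) < r := by exact_mod_cast h0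
      have := hu1 r h0
      rw [cf]
      positivity
  have hcf2 : ∀ r, 0 ≤ cf u2 r := by
    intro r
    rcases Nat.eq_zero_or_pos r with h0 | h0
    · subst h0; simp [cf]
    · have hr : (0 : ℝ) < r := by exact_mod_cast h0
      have := hu2 r h0
      rw [cf]
      positivity
  -- the nonnegative "excess" coefficients
  set δ : ℕ → ℝ := fun r => cf u1 r + cf u2 r - (r : ℝ)⁻¹ with hδdef
  have hδ0 : δ 0 = 0 := by
    simp [hδdef, cf]
  have hδnonneg : ∀ r, 0 ≤ δ r := by
    intro r
    rcases Nat.eq_zero_or_pos r with h0 | h0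
    · subst h0; rw [hδ0]
    · have hr : (0 : ℝ) < r := by exact_mod_cast h0
      have hp1 := hu1 r h0
      have hp2 := hu2 r h0
      have hkey : cf u1 r + cf u2 r = ((r : ℝ) * (1 - (z ^ r) ^ 2))⁻¹ := by
        rw [cf, cf, hu1def, hu2def]
        have h1 : (2 * (r : ℝ)) * (1 - z ^ r) ≠ 0 := by positivity
        have h2 : (2 * (r : ℝ)) * (1 + z ^ r) ≠ 0 := by positivity
        have h3 : (r : ℝ) * (1 - (z ^ r) ^ 2) ≠ 0 := by
          have : (0 : ℝ) < 1 - (z ^ r) ^ 2 := by nlinarith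
          positivity
        show ((2 * (r:ℝ)) * (1 - z ^ r))⁻¹ + ((2 * (r:ℝ)) * (1 + z ^ r))⁻¹ = _
        rw [inv_eq_one_div, inv_eq_one_div, inv_eq_one_div, div_add_div _ _ h1 h2,
          div_eq_div_iff (mul_ne_zero h1 h2) h3]
        ring
      rw [hδdef]
      simp only []
      rw [hkey]
      have hsq : (0 : ℝ) < 1 - (z ^ r) ^ 2 := by nlinarith
      have hle : (r : ℝ) * (1 - (z ^ r) ^ 2) ≤ (r : ℝ) := by nlinarith
      have hpos : (0 : ℝ) < (r : ℝ) * (1 - (z ^ r) ^ 2) := by positivity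
      have := inv_anti₀ hpos hle
      linarith
  -- master formula
  set Cμ : ℝ := wgt (cf u1) mu.parts with hCμ
  set Cl : ℝ := wgt (cf u2) lam.parts with hCl
  have hCμ0 : 0 ≤ Cμ := wgt_nonneg hcf1 _
  have hCl0 : 0 ≤ Cl := wgt_nonneg hcf2 _
  have hconv : RecSeq (fun M => ∑ j ∈ Finset.range (M + 1),
      Hseq (cf u1) j * Hseq (cf u2) (M - j)) (fun r => cf u1 r + cf u2 r) :=
    recSeq_mul (recSeq_Hseq (cf u1)) (recSeq_Hseq (cf u2))
  have hpart : RecSeq (fun M => ∑ i ∈ Finset.range (M + 1), Hseq δ i)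
      (fun r => (r : ℝ)⁻¹ + δ r) := recSeq_partial (recSeq_Hseq δ)
  have hfun : (fun r : ℕ => (r : ℝ)⁻¹ + δ r) = fun r : ℕ => cf u1 r + cf u2 r := by
    funext r
    rw [hδdef]
    ring
  rw [hfun] at hpart
  have hHeq := recSeq_unique hconv hpart
  have master : ∀ n : ℕ, fEval mu.parts lam.parts n z
      = if A + B ≤ n then
          (Cμ * Cl) * ∑ i ∈ Finset.range (n - A - B + 1), Hseq δ i else 0 := by
    intro n
    rw [fEval_eq_sum]
    have hk : ∀ k, (∑ ν : Nat.Partition k, genTerm u1 mu.parts ν.parts)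
        = if A ≤ k then Cμ * Hseq (cf u1) (k - A) else 0 := fun k => sum_genTerm hu1ne mu k
    have hk2 : ∀ k, (∑ κ : Nat.Partition k, genTerm u2 lam.parts κ.parts)
        = if B ≤ k then Cl * Hseq (cf u2) (k - B) else 0 := fun k => sum_genTerm hu2ne lam k
    calc ∑ k ∈ Finset.range (n + 1),
        (∑ ν : Nat.Partition k, genTerm u1 mu.parts ν.parts) *
        (∑ κ : Nat.Partition (n - k), genTerm u2 lam.parts κ.parts)
        = ∑ k ∈ Finset.range (n + 1),
          (if A ≤ k then Cμ * Hseq (cf u1) (k - A) else 0) *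
          (if B ≤ n - k then Cl * Hseq (cf u2) (n - k - B) else 0) := by
          refine Finset.sum_congr rfl fun k _ => ?_
          rw [hk, hk2]
      _ = if A + B ≤ n then
            ∑ j ∈ Finset.range (n - A - B + 1),
              (Cμ * Hseq (cf u1) j) * (Cl * Hseq (cf u2) (n - A - B - j)) else 0 :=
          sum_if_shift (fun j => Cμ * Hseq (cf u1) j) (fun j => Cl * Hseq (cf u2) j) A B n
      _ = if A + B ≤ n then
            (Cμ * Cl) * ∑ i ∈ Finset.range (n - A - B + 1), Hseq δ i else 0 := by
          by_cases hAB : A + B ≤ n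
          · rw [if_pos hAB, if_pos hAB]
            rw [← hHeq (n - A - B), Finset.mul_sum]
            refine Finset.sum_congr rfl fun j _ => ?_
            ring
          · rw [if_neg hAB, if_neg hAB]
  intro n hn
  rw [master, master]
  by_cases h1 : A + B ≤ n - 1
  · have h2 : A + B ≤ n := by omega
    rw [if_pos h1, if_pos h2]
    have hM : n - A - B = (n - 1 - A - B) + 1 := by omega
    rw [hM]
    conv_rhs => rw [Finset.sum_range_succ]
    have hnn : 0 ≤ Hseq δ ((n - 1 - A - B) + 1) := Hseq_nonneg hδnonneg _
    have := mul_le_mul_of_nonneg_left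
      (le_add_of_nonneg_right hnn :
        (∑ i ∈ Finset.range ((n - 1 - A - B) + 1), Hseq δ i) ≤
          (∑ i ∈ Finset.range ((n - 1 - A - B) + 1), Hseq δ i) + Hseq δ ((n - 1 - A - B) + 1))
      (mul_nonneg hCμ0 hCl0)
    exact this
  · rw [if_neg h1]
    by_cases h2 : A + B ≤ n
    · rw [if_pos h2]
      have : 0 ≤ ∑ i ∈ Finset.range (n - A - B + 1), Hseq δ i :=
        Finset.sum_nonneg fun i _ => Hseq_nonneg hδnonneg i
      exact mul_nonneg (mul_nonneg hCμ0 hCl0) this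
    · rw [if_neg h2]
end

section
/- Fix a double partition (μ,λ), and for n ≥ 0 and i ≥ 0 let β_i(n) ∈ ℚ be the coefficient of z^i in g_n(μ,λ) · ∏_{k=1}^n (1-z^{2k}). Then for every i ≥ 0 and every n ≥ |μ| + |λ| + i, one has β_i(n) = β_i(n+1). -/
open Finset PowerSeries

/-- `∏_{r≥1} (1-z^r)^{-n_r(ν)} ∈ ℚ[[z]]`. -/
noncomputable def facMinus (nu : Multiset ℕ) : PowerSeries ℚ :=
  ∏ r ∈ nu.toFinset, ((1 - (PowerSeries.X : PowerSeries ℚ) ^ r)⁻¹) ^ (nu.count r)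

/-- `∏_{r≥1} (1+z^r)^{-n_r(κ)} ∈ ℚ[[z]]`. -/
noncomputable def facPlus (ka : Multiset ℕ) : PowerSeries ℚ :=
  ∏ r ∈ ka.toFinset, ((1 + (PowerSeries.X : PowerSeries ℚ) ^ r)⁻¹) ^ (ka.count r)

/-- `g_n(μ,λ) ∈ ℚ[[z]]`; the sum over double partitions of `n` is realized as a sum over
`k ≤ n`, `ν ⊢ k`, `κ ⊢ n - k`. -/
noncomputable def gSer (muP lamP : Multiset ℕ) (n : ℕ) : PowerSeries ℚ :=
  ∑ k ∈ Finset.range (n + 1), ∑ nu : Nat.Partition k, ∑ ka : Nat.Partition (n - k),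
    PowerSeries.C (R := ℚ)
        (((binomOf nu.parts muP : ℚ) * (binomOf ka.parts lamP : ℚ)) /
          ((vOf nu.parts : ℚ) * (vOf ka.parts : ℚ))) *
      facMinus nu.parts * facPlus ka.parts

/-- the twisted Betti number `β_i(n)`: the coefficient of `z^i` in
`g_n(μ,λ) · ∏_{k=1}^n (1-z^{2k})`. -/
noncomputable def betaC (muP lamP : Multiset ℕ) (i n : ℕ) : ℚ :=
  PowerSeries.coeff (R := ℚ) i
    (gSer muP lamP n * ∏ k ∈ Finset.Icc 1 n, (1 - (PowerSeries.X : PowerSeries ℚ) ^ (2 * k)))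


namespace StabAux

noncomputable section

abbrev K : Type := PowerSeries ℚ

def uu (r : ℕ) : K := (1 - (X : K) ^ r)⁻¹
def vv (r : ℕ) : K := (1 + (X : K) ^ r)⁻¹
def pp (r : ℕ) : K := (1 - (X : K) ^ (2 * r))⁻¹
def HH (M : ℕ) : K := ∏ k ∈ Icc 1 M, pp k

lemma constCoeff_one_sub (r : ℕ) (hr : 1 ≤ r) :
    constantCoeff (R := ℚ) (1 - (X : K) ^ r) ≠ 0 := by
  simp [map_pow, zero_pow (by omega : r ≠ 0)]

lemma constCoeff_one_add (r : ℕ) (hr : 1 ≤ r) :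
    constantCoeff (R := ℚ) (1 + (X : K) ^ r) ≠ 0 := by
  simp [map_pow, zero_pow (by omega : r ≠ 0)]

lemma uu_mul (r : ℕ) (hr : 1 ≤ r) : (1 - (X : K) ^ r) * uu r = 1 :=
  PowerSeries.mul_inv_cancel _ (constCoeff_one_sub r hr)

lemma vv_mul (r : ℕ) (hr : 1 ≤ r) : (1 + (X : K) ^ r) * vv r = 1 :=
  PowerSeries.mul_inv_cancel _ (constCoeff_one_add r hr)

lemma pp_mul (r : ℕ) (hr : 1 ≤ r) : (1 - (X : K) ^ (2 * r)) * pp r = 1 :=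
  PowerSeries.mul_inv_cancel _ (constCoeff_one_sub _ (by omega))

lemma one_sub_sq (r : ℕ) :
    (1 - (X : K) ^ r) * (1 + (X : K) ^ r) = 1 - (X : K) ^ (2 * r) := by
  have h : (X : K) ^ r * (X : K) ^ r = (X : K) ^ (2 * r) := by
    rw [← pow_add]; congr 1; omega
  linear_combination -h

lemma uu_mul_vv (r : ℕ) (hr : 1 ≤ r) : uu r * vv r = pp r := by
  have h : (1 - (X : K) ^ (2 * r)) * (uu r * vv r) = 1 := by
    rw [← one_sub_sq]
    calc (1 - (X : K) ^ r) * (1 + (X : K) ^ r) * (uu r * vv r)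
        = ((1 - (X : K) ^ r) * uu r) * ((1 + (X : K) ^ r) * vv r) := by ring
      _ = 1 := by rw [uu_mul r hr, vv_mul r hr, one_mul]
  calc uu r * vv r = ((1 - (X : K) ^ (2*r)) * pp r) * (uu r * vv r) := by
        rw [pp_mul r hr, one_mul]
    _ = ((1 - (X : K) ^ (2*r)) * (uu r * vv r)) * pp r := by ring
    _ = pp r := by rw [h, one_mul]

lemma uu_add_vv (r : ℕ) (hr : 1 ≤ r) : uu r + vv r = 2 * pp r := by
  calc uu r + vv r
      = uu r * ((1 + (X : K) ^ r) * vv r) + ((1 - (X : K) ^ r) * uu r) * vv r := by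
        rw [uu_mul r hr, vv_mul r hr]; ring
    _ = (uu r * vv r) * ((1 + (X : K) ^ r) + (1 - (X : K) ^ r)) := by ring
    _ = (uu r * vv r) * 2 := by ring
    _ = 2 * pp r := by rw [uu_mul_vv r hr]; ring

lemma HH_zero : HH 0 = 1 := by simp [HH]

lemma HH_succ (M : ℕ) : HH (M + 1) = HH M * pp (M + 1) :=
  Finset.prod_Icc_succ_top (by omega) _

lemma HH_pred (M : ℕ) : (1 - (X : K) ^ (2 * (M + 1))) * HH (M + 1) = HH M := by
  rw [HH_succ]
  calc (1 - (X : K) ^ (2 * (M+1))) * (HH M * pp (M + 1))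
      = ((1 - (X : K) ^ (2 * (M+1))) * pp (M + 1)) * HH M := by ring
    _ = HH M := by rw [pp_mul (M+1) (by omega), one_mul]

lemma pp_split (r : ℕ) (hr : 1 ≤ r) : pp r = 1 + (X : K) ^ (2 * r) * pp r := by
  linear_combination pp_mul r hr

def AA (M : ℕ) : K := ∑ r ∈ Icc 1 M, pp r * HH (M - r)
def WW (M : ℕ) : K := ∑ r ∈ Icc 1 M, (X : K) ^ (2 * r) * pp r * HH (M - r)

lemma AA_split (M : ℕ) : AA M = (∑ m ∈ range M, HH m) + WW M := by
  have : ∀ r ∈ Icc 1 M, pp r * HH (M - r)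
      = HH (M - r) + (X : K) ^ (2*r) * pp r * HH (M - r) := by
    intro r hr
    simp only [mem_Icc] at hr
    linear_combination HH (M - r) * pp_split r hr.1
  rw [AA, Finset.sum_congr rfl this, Finset.sum_add_distrib]
  congr 1
  · exact Finset.sum_nbij' (fun r => M - r) (fun m => M - m)
      (fun r hr => by simp only [mem_Icc] at hr; simp only [mem_range]; omega)
      (fun m hm => by simp only [mem_range] at hm; simp only [mem_Icc]; omega)
      (fun r hr => by simp only [mem_Icc] at hr; show M - (M - r) = r; omega)
      (fun m hm => by simp only [mem_range] at hm; show M - (M - m) = m; omega)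
      (fun r hr => rfl)

lemma WW_rec (M : ℕ) : WW (M + 1) = WW M + (X : K) ^ (2 * (M + 1)) * AA (M + 1) := by
  have key : ∀ r ∈ Icc 1 (M + 1),
      (X : K) ^ (2*r) * pp r * HH (M + 1 - r)
        = (if r ≤ M then (X : K) ^ (2*r) * pp r * HH (M - r) else 0)
          + (X : K) ^ (2 * (M+1)) * (pp r * HH (M + 1 - r)) := by
    intro r hr
    simp only [mem_Icc] at hr
    by_cases h : r ≤ M
    · simp only [if_pos h]
      have h1 : M + 1 - r = (M - r) + 1 := by omega
      have h2 : (X : K) ^ (2*r) * (X : K) ^ (2 * (M + 1 - r)) = (X:K) ^ (2 * (M+1)) := by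
        rw [← pow_add]; congr 1; omega
      have h3 := HH_pred (M - r)
      rw [h1] at *
      calc (X : K) ^ (2*r) * pp r * HH (M - r + 1)
          = (X : K) ^ (2*r) * pp r * (((1 - (X:K) ^ (2 * (M - r + 1))) * HH (M - r + 1))
              + (X:K) ^ (2 * (M - r + 1)) * HH (M - r + 1)) := by ring
        _ = (X : K) ^ (2*r) * pp r * HH (M - r)
              + ((X : K) ^ (2*r) * (X : K) ^ (2 * (M - r + 1))) * (pp r * HH (M - r + 1)) := by
            rw [h3]; ring
        _ = _ := by rw [h2]
    · have hr1 : r = M + 1 := by omega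
      simp only [if_neg h]
      subst hr1
      simp [HH_zero]
  rw [WW, Finset.sum_congr rfl key, Finset.sum_add_distrib]
  congr 1
  · rw [Finset.sum_ite, Finset.sum_const_zero, add_zero]
    rw [WW]
    apply Finset.sum_congr
    · ext r; simp only [mem_filter, mem_Icc]; omega
    · intro r _; rfl
  · rw [AA, Finset.mul_sum]

lemma telescope (M : ℕ) :
    (∑ m ∈ range M, HH m) + (∑ k ∈ range M, k • ((X : K) ^ (2*k) * HH k))
      = M • HH (M - 1) := by
  induction M with
  | zero => simp
  | succ M ih =>
    rw [Finset.sum_range_succ, Finset.sum_range_succ]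
    have step : M • HH (M - 1) + M • ((X : K) ^ (2 * M) * HH M) = M • HH M := by
      rcases Nat.eq_zero_or_pos M with h | h
      · subst h; simp
      · obtain ⟨m, rfl⟩ : ∃ m, M = m + 1 := ⟨M - 1, by omega⟩
        rw [← smul_add]
        congr 1
        simp only [Nat.add_sub_cancel]
        linear_combination -HH_pred m
    calc ∑ m ∈ range M, HH m + HH M
          + (∑ k ∈ range M, k • ((X : K) ^ (2*k) * HH k) + M • ((X:K) ^ (2*M) * HH M))
        = (∑ m ∈ range M, HH m + ∑ k ∈ range M, k • ((X : K) ^ (2*k) * HH k))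
            + M • ((X:K) ^ (2*M) * HH M) + HH M := by ring
      _ = M • HH (M - 1) + M • ((X:K) ^ (2*M) * HH M) + HH M := by rw [ih]
      _ = M • HH M + HH M := by rw [step]
      _ = (M + 1) • HH (M + 1 - 1) := by
          simp only [Nat.add_sub_cancel, succ_nsmul]

lemma one_sub_X_pow_ne_zero (m : ℕ) (hm : 1 ≤ m) : (1 - (X : K) ^ m) ≠ 0 := by
  intro h
  have := constCoeff_one_sub m hm
  rw [h] at this
  simp at this

lemma AA_WW (M : ℕ) :
    AA M = M • HH M ∧ WW M = ∑ k ∈ Icc 1 M, k • ((X : K) ^ (2*k) * HH k) := by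
  induction M with
  | zero => constructor <;> simp [AA, WW]
  | succ M ih =>
    obtain ⟨ihA, ihW⟩ := ih
    have hW' : WW M = ∑ k ∈ range (M + 1), k • ((X : K) ^ (2*k) * HH k) := by
      rw [ihW]
      apply Finset.sum_subset
      · intro x hx; simp only [mem_Icc] at hx; simp only [mem_range]; omega
      · intro x hxr hx
        simp only [mem_range] at hxr
        simp only [mem_Icc, not_and, not_le] at hx
        have : x = 0 := by
          by_cases h1 : 1 ≤ x
          · exact absurd (hx h1) (by omega)
          · omega
        subst this; simp
    have key : (1 - (X : K) ^ (2 * (M + 1))) * AA (M + 1) = (M + 1) • HH M := by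
      have h1 : AA (M + 1) = (∑ m ∈ range (M+1), HH m) + WW (M + 1) := AA_split (M + 1)
      have h2 := WW_rec M
      have h3 : AA (M + 1) - (X : K) ^ (2 * (M+1)) * AA (M + 1)
          = (∑ m ∈ range (M+1), HH m) + WW M := by
        linear_combination h1 + h2
      calc (1 - (X : K) ^ (2 * (M + 1))) * AA (M + 1)
          = AA (M + 1) - (X : K) ^ (2 * (M+1)) * AA (M + 1) := by ring
        _ = (∑ m ∈ range (M+1), HH m) + ∑ k ∈ range (M+1), k • ((X : K) ^ (2*k) * HH k) := by
            rw [h3, hW']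
        _ = (M + 1) • HH (M + 1 - 1) := telescope (M + 1)
        _ = (M + 1) • HH M := by norm_num
    have hA : AA (M + 1) = (M + 1) • HH (M + 1) := by
      apply mul_left_cancel₀ (one_sub_X_pow_ne_zero (2 * (M + 1)) (by omega))
      rw [key, mul_smul_comm, HH_pred M]
    refine ⟨hA, ?_⟩
    rw [WW_rec M, ihW, Finset.sum_Icc_succ_top (by omega : 1 ≤ M + 1), hA]
    congr 1
    rw [mul_smul_comm]
def mprod (F : ℕ → ℕ → K) (s : Multiset ℕ) : K := ∏ r ∈ s.toFinset, F r (s.count r)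

lemma mprod_zero (F : ℕ → ℕ → K) : mprod F 0 = 1 := by simp [mprod]

lemma mprod_eq_prod (F : ℕ → ℕ → K) (hF : ∀ r, F r 0 = 1) (s : Multiset ℕ) {t : Finset ℕ}
    (h : s.toFinset ⊆ t) : mprod F s = ∏ r ∈ t, F r (s.count r) := by
  apply Finset.prod_subset h
  intro x _ hxs
  rw [Multiset.count_eq_zero_of_notMem (by simpa [Multiset.mem_toFinset] using hxs), hF]

lemma mprod_split (F G H : ℕ → ℕ → K) (hG : ∀ r, G r 0 = 1) (hH : ∀ r, H r 0 = 1)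
    (s t : Multiset ℕ)
    (hsplit : ∀ r ∈ (s + t).toFinset,
      F r (s.count r + t.count r) = G r (s.count r) * H r (t.count r)) :
    mprod F (s + t) = mprod G s * mprod H t := by
  rw [mprod]
  have h1 : ∀ r ∈ (s + t).toFinset, F r ((s + t).count r) = G r (s.count r) * H r (t.count r) := by
    intro r hr; rw [Multiset.count_add]; exact hsplit r hr
  rw [Finset.prod_congr rfl h1, Finset.prod_mul_distrib,
    ← mprod_eq_prod G hG s (by rw [Multiset.toFinset_add]; exact Finset.subset_union_left),
    ← mprod_eq_prod H hH t (by rw [Multiset.toFinset_add]; exact Finset.subset_union_right)]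

lemma mprod_eq_mul_erase (F : ℕ → ℕ → K) (hF : ∀ r, F r 0 = 1) (s : Multiset ℕ) (r : ℕ) :
    mprod F s = F r (s.count r) * ∏ x ∈ s.toFinset.erase r, F x (s.count x) := by
  by_cases h : r ∈ s.toFinset
  · rw [mprod, ← Finset.mul_prod_erase s.toFinset _ h]
  · rw [Multiset.count_eq_zero_of_notMem (by simpa [Multiset.mem_toFinset] using h), hF, one_mul,
      Finset.erase_eq_of_notMem h, mprod]

lemma mprod_cons (F : ℕ → ℕ → K) (hF : ∀ r, F r 0 = 1) (r : ℕ) (s : Multiset ℕ) :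
    mprod F (r ::ₘ s) = F r (s.count r + 1) * ∏ x ∈ s.toFinset.erase r, F x (s.count x) := by
  rw [mprod_eq_mul_erase F hF (r ::ₘ s) r, Multiset.count_cons_self]
  congr 1
  rw [Multiset.toFinset_cons, Finset.erase_insert_eq_erase]
  apply Finset.prod_congr rfl
  intro x hx
  rw [Multiset.count_cons_of_ne (Finset.ne_of_mem_erase hx)]

def Phi (w : ℕ → K) (r a : ℕ) : K := (C (R := ℚ) ((a.factorial : ℚ)⁻¹)) * (w r) ^ a

lemma Phi_zero (w : ℕ → K) : ∀ r, Phi w r 0 = 1 := by intro r; simp [Phi]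

def tW (w : ℕ → K) (j : ℕ) : K := ∑ α : Nat.Partition j, mprod (Phi w) α.parts

lemma nsmul_eq_C_mul (n : ℕ) (x : K) : n • x = C (R := ℚ) (n : ℚ) * x := by
  rw [nsmul_eq_mul, ← map_natCast (C (R := ℚ)) n]

lemma count_smul_mprod (w : ℕ → K) (r : ℕ) (s : Multiset ℕ) (hmem : r ∈ s) :
    (s.count r * r) • mprod (Phi w) s = r • (w r * mprod (Phi w) (s.erase r)) := by
  obtain ⟨t, rfl⟩ : ∃ t, s = r ::ₘ t := ⟨s.erase r, (Multiset.cons_erase hmem).symm⟩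
  rw [Multiset.erase_cons_head, Multiset.count_cons_self,
    mprod_cons _ (Phi_zero w) r t, mprod_eq_mul_erase _ (Phi_zero w) t r]
  set c := t.count r with hc
  set R := ∏ x ∈ t.toFinset.erase r, Phi w x (t.count x) with hR
  rw [nsmul_eq_C_mul, nsmul_eq_C_mul]
  simp only [Phi]
  have h1 : (c.factorial : ℚ) ≠ 0 := Nat.cast_ne_zero.2 c.factorial_ne_zero
  have hsc : (((c + 1) * r : ℕ) : ℚ) * (((c + 1).factorial : ℚ))⁻¹
      = ((r : ℕ) : ℚ) * ((c.factorial : ℚ))⁻¹ := by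
    rw [Nat.factorial_succ]
    push_cast
    rw [mul_inv]
    field_simp
  have hC : (C (R := ℚ) (((c + 1) * r : ℕ) : ℚ)) * C (R := ℚ) (((c + 1).factorial : ℚ)⁻¹)
      = C (R := ℚ) ((r : ℕ) : ℚ) * C (R := ℚ) ((c.factorial : ℚ)⁻¹) := by
    rw [← map_mul, ← map_mul, hsc]
  linear_combination (w r ^ (c + 1) * R) * hC

lemma sum_count_mul (s : Multiset ℕ) : ∑ r ∈ s.toFinset, s.count r * r = s.sum := by
  have h := Finset.sum_multiset_map_count s (id : ℕ → ℕ)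
  rw [Multiset.map_id] at h
  have h2 : ∑ r ∈ s.toFinset, s.count r * r = ∑ m ∈ s.toFinset, s.count m • id m :=
    Finset.sum_congr rfl (fun x _ => by simp)
  rw [h2, ← h]

lemma tW_newton (w : ℕ → K) (j : ℕ) :
    j • tW w j = ∑ r ∈ Icc 1 j, r • (w r * tW w (j - r)) := by
  rw [tW, Finset.smul_sum]
  have hterm : ∀ α : Nat.Partition j,
      j • mprod (Phi w) α.parts
        = ∑ r ∈ Icc 1 j, (α.parts.count r * r) • mprod (Phi w) α.parts := by
    intro α
    have h1 : α.parts.toFinset ⊆ Icc 1 j := by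
      intro x hx
      rw [Multiset.mem_toFinset] at hx
      simp only [mem_Icc]
      refine ⟨α.parts_pos hx, ?_⟩
      rw [← α.parts_sum]
      exact Multiset.single_le_sum (fun y _ => Nat.zero_le y) x hx
    have hsum : ∑ r ∈ Icc 1 j, α.parts.count r * r = j := by
      rw [← Finset.sum_subset h1 (fun x _ hx => by
        rw [Multiset.count_eq_zero_of_notMem
          (by simpa [Multiset.mem_toFinset] using hx)]; ring)]
      rw [sum_count_mul, α.parts_sum]
    rw [← Finset.sum_smul, hsum]
  rw [Finset.sum_congr rfl (fun α _ => hterm α), Finset.sum_comm]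
  apply Finset.sum_congr rfl
  intro r hr
  simp only [mem_Icc] at hr
  rw [tW, Finset.mul_sum, Finset.smul_sum]
  rw [← Finset.sum_filter_of_ne
    (p := fun α : Nat.Partition j => r ∈ α.parts) (s := Finset.univ)
    (fun α _ hne => by
      by_contra hmem
      rw [Multiset.count_eq_zero_of_notMem hmem] at hne
      simp at hne)]
  refine Finset.sum_bij'
    (fun (α : Nat.Partition j) (hα : α ∈ Finset.univ.filter (fun x => r ∈ x.parts)) =>
      (⟨α.parts.erase r,
        fun hi => α.parts_pos (Multiset.mem_of_mem_erase hi),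
        by
          have hmem : r ∈ α.parts := (Finset.mem_filter.1 hα).2
          have h := Multiset.cons_erase hmem
          have h2 : (r ::ₘ α.parts.erase r).sum = j := by rw [h, α.parts_sum]
          rw [Multiset.sum_cons] at h2
          omega⟩ : Nat.Partition (j - r)))
    (fun (β : Nat.Partition (j - r)) _ =>
      (⟨r ::ₘ β.parts,
        fun hi => by
          rcases Multiset.mem_cons.1 hi with h | h
          · omega
          · exact β.parts_pos h,
        by rw [Multiset.sum_cons, β.parts_sum]; omega⟩ : Nat.Partition j))
    (fun α hα => Finset.mem_univ _)
    (fun β hβ => by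
      simp only [Finset.mem_filter, Finset.mem_univ, true_and]
      exact Multiset.mem_cons_self r β.parts)
    (fun α hα => by
      apply Nat.Partition.ext
      exact Multiset.cons_erase (Finset.mem_filter.1 hα).2)
    (fun β hβ => by
      apply Nat.Partition.ext
      exact Multiset.erase_cons_head r β.parts)
    (fun α hα => count_smul_mprod w r α.parts (Finset.mem_filter.1 hα).2)
def SS (w1 w2 : ℕ → K) (M : ℕ) : K := ∑ j ∈ range (M + 1), tW w1 j * tW w2 (M - j)

lemma swap_sum (f : ℕ → ℕ → K) (M : ℕ) :
    ∑ j ∈ range (M + 1), ∑ r ∈ Icc 1 j, f r j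
      = ∑ r ∈ Icc 1 M, ∑ j' ∈ range (M - r + 1), f r (j' + r) := by
  have h1 : ∀ j ∈ range (M + 1),
      ∑ r ∈ Icc 1 j, f r j = ∑ r ∈ Icc 1 M, if r ≤ j then f r j else 0 := by
    intro j hj
    simp only [mem_range] at hj
    rw [Finset.sum_ite, Finset.sum_const_zero, add_zero]
    apply Finset.sum_congr _ (fun _ _ => rfl)
    ext r
    simp only [mem_Icc, mem_filter]
    omega
  rw [Finset.sum_congr rfl h1, Finset.sum_comm]
  apply Finset.sum_congr rfl
  intro r hr
  simp only [mem_Icc] at hr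
  rw [Finset.sum_ite, Finset.sum_const_zero, add_zero]
  apply Finset.sum_nbij' (fun j => j - r) (fun j' => j' + r)
  · intro a ha; simp only [mem_filter, mem_range] at ha ⊢; omega
  · intro a ha; simp only [mem_range] at ha; simp only [mem_filter, mem_range]; omega
  · intro a ha; simp only [mem_filter, mem_range] at ha; show a - r + r = a; omega
  · intro a ha; simp only [mem_range] at ha; show a + r - r = a; omega
  · intro a ha; simp only [mem_filter, mem_range] at ha
    have e : a - r + r = a := by omega
    rw [e]

lemma swap_sum2 (f : ℕ → ℕ → K) (M : ℕ) :
    ∑ j ∈ range (M + 1), ∑ r ∈ Icc 1 (M - j), f r j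
      = ∑ r ∈ Icc 1 M, ∑ j ∈ range (M - r + 1), f r j := by
  have h1 : ∀ j ∈ range (M + 1),
      ∑ r ∈ Icc 1 (M - j), f r j = ∑ r ∈ Icc 1 M, if j ≤ M - r then f r j else 0 := by
    intro j hj
    simp only [mem_range] at hj
    rw [Finset.sum_ite, Finset.sum_const_zero, add_zero]
    apply Finset.sum_congr _ (fun _ _ => rfl)
    ext r
    simp only [mem_Icc, mem_filter]
    omega
  rw [Finset.sum_congr rfl h1, Finset.sum_comm]
  apply Finset.sum_congr rfl
  intro r hr
  simp only [mem_Icc] at hr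
  rw [Finset.sum_ite, Finset.sum_const_zero, add_zero]
  apply Finset.sum_congr _ (fun _ _ => rfl)
  ext j
  simp only [mem_filter, mem_range]
  omega

lemma SS_newton (w1 w2 : ℕ → K) (M : ℕ) :
    M • SS w1 w2 M = ∑ r ∈ Icc 1 M, r • ((w1 r + w2 r) * SS w1 w2 (M - r)) := by
  have expand : M • SS w1 w2 M
      = (∑ j ∈ range (M + 1), ∑ r ∈ Icc 1 j, r • (w1 r * (tW w1 (j - r) * tW w2 (M - j))))
        + (∑ j ∈ range (M + 1), ∑ r ∈ Icc 1 (M - j),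
            r • (w2 r * (tW w1 j * tW w2 (M - j - r)))) := by
    rw [SS, Finset.smul_sum, ← Finset.sum_add_distrib]
    apply Finset.sum_congr rfl
    intro j hj
    simp only [mem_range] at hj
    have hsplit : M • (tW w1 j * tW w2 (M - j))
        = j • (tW w1 j * tW w2 (M - j)) + (M - j) • (tW w1 j * tW w2 (M - j)) := by
      rw [← add_nsmul]; congr 1; omega
    rw [hsplit, ← smul_mul_assoc, ← mul_smul_comm, tW_newton w1 j, tW_newton w2 (M - j),
      Finset.sum_mul, Finset.mul_sum]
    congr 1
    · apply Finset.sum_congr rfl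
      intro r _
      rw [smul_mul_assoc, mul_assoc]
    · apply Finset.sum_congr rfl
      intro r _
      rw [mul_smul_comm, ← mul_assoc, mul_comm (tW w1 j) (w2 r), mul_assoc]
  rw [expand, swap_sum, swap_sum2, ← Finset.sum_add_distrib]
  apply Finset.sum_congr rfl
  intro r hr
  simp only [mem_Icc] at hr
  have hA : ∑ j' ∈ range (M - r + 1), r • (w1 r * (tW w1 (j' + r - r) * tW w2 (M - (j' + r))))
      = r • (w1 r * SS w1 w2 (M - r)) := by
    rw [SS, Finset.mul_sum, Finset.smul_sum]
    apply Finset.sum_congr rfl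
    intro j' hj'
    simp only [mem_range] at hj'
    have e1 : j' + r - r = j' := by omega
    have e2 : M - (j' + r) = M - r - j' := by omega
    rw [e1, e2]
  have hB : ∑ j ∈ range (M - r + 1), r • (w2 r * (tW w1 j * tW w2 (M - j - r)))
      = r • (w2 r * SS w1 w2 (M - r)) := by
    rw [SS, Finset.mul_sum, Finset.smul_sum]
    apply Finset.sum_congr rfl
    intro j hj
    simp only [mem_range] at hj
    have e2 : M - j - r = M - r - j := by omega
    rw [e2]
  rw [hA, hB, ← smul_add, ← add_mul]

lemma parts_zero (α : Nat.Partition 0) : α.parts = 0 := by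
  rw [Multiset.eq_zero_iff_forall_notMem]
  intro x hx
  have h1 := α.parts_pos hx
  have h2 := Multiset.single_le_sum (fun y _ => Nat.zero_le y) x hx
  rw [α.parts_sum] at h2
  omega

lemma tW_zero (w : ℕ → K) : tW w 0 = 1 := by
  rw [tW]
  rw [Finset.sum_congr rfl (fun α _ => by rw [parts_zero α, mprod_zero])]
  simp

lemma SS_zero (w1 w2 : ℕ → K) : SS w1 w2 0 = 1 := by
  simp [SS, tW_zero]

def wU (r : ℕ) : K := C (R := ℚ) (((2 * r : ℕ) : ℚ))⁻¹ * uu r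
def wV (r : ℕ) : K := C (R := ℚ) (((2 * r : ℕ) : ℚ))⁻¹ * vv r

lemma two_C : (2 : K) = C (R := ℚ) 2 := (map_ofNat (C (R := ℚ)) 2).symm

lemma wsum (r : ℕ) (hr : 1 ≤ r) (x : K) : r • ((wU r + wV r) * x) = pp r * x := by
  have h2 : wU r + wV r = C (R := ℚ) (((2 * r : ℕ) : ℚ))⁻¹ * (2 * pp r) := by
    rw [wU, wV, ← mul_add, uu_add_vv r hr]
  have hr0 : ((2 * r : ℕ) : ℚ) ≠ 0 := Nat.cast_ne_zero.2 (by omega)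
  have hq : ((r : ℕ) : ℚ) * (((2 * r : ℕ) : ℚ))⁻¹ * 2 = 1 := by
    push_cast
    push_cast at hr0
    field_simp
  have key : C (R := ℚ) ((r : ℕ) : ℚ) * C (R := ℚ) (((2 * r : ℕ) : ℚ))⁻¹ * C (R := ℚ) 2 = 1 := by
    rw [← map_mul, ← map_mul, hq, map_one]
  rw [nsmul_eq_C_mul, h2, two_C]
  linear_combination (pp r * x) * key

lemma C_ne_zero {q : ℚ} (h : q ≠ 0) : (C (R := ℚ) q : K) ≠ 0 := fun hh => by
  have := congrArg (constantCoeff (R := ℚ)) hh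
  simp at this
  exact h this

lemma SS_eq_HH : ∀ M, SS wU wV M = HH M := by
  intro M
  induction M using Nat.strong_induction_on with
  | _ M ih =>
    match M with
    | 0 => rw [SS_zero, HH_zero]
    | (M + 1) =>
      have h1 : (M + 1) • SS wU wV (M + 1) = AA (M + 1) := by
        rw [SS_newton, AA]
        apply Finset.sum_congr rfl
        intro r hr
        simp only [mem_Icc] at hr
        rw [wsum r hr.1, ih (M + 1 - r) (by omega)]
      have h2 : (M + 1) • SS wU wV (M + 1) = (M + 1) • HH (M + 1) := by
        rw [h1, (AA_WW (M + 1)).1]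
      rw [nsmul_eq_C_mul, nsmul_eq_C_mul] at h2
      exact mul_left_cancel₀ (C_ne_zero (Nat.cast_ne_zero.2 (by omega))) h2
def wGen (base : ℕ → K) (r : ℕ) : K := C (R := ℚ) (((2 * r : ℕ) : ℚ))⁻¹ * base r

def FGen (base : ℕ → K) (muP s : Multiset ℕ) : K :=
  C (R := ℚ) ((binomOf s muP : ℚ) / (vOf s : ℚ)) * ∏ r ∈ s.toFinset, (base r) ^ (s.count r)

lemma FGen_eq_zero (base : ℕ → K) {muP s : Multiset ℕ} (h : ¬ muP ≤ s) :
    FGen base muP s = 0 := by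
  have hb : binomOf s muP = 0 := by
    rw [Multiset.le_iff_count] at h
    push_neg at h
    obtain ⟨r, hr⟩ := h
    have hrmem : r ∈ muP.toFinset := Multiset.mem_toFinset.2 (Multiset.count_pos.1 (by omega))
    exact Finset.prod_eq_zero hrmem (Nat.choose_eq_zero_of_lt hr)
  rw [FGen, hb]
  norm_num

lemma mul_sum_le {muP s : Multiset ℕ} (h : muP ≤ s) : muP.sum ≤ s.sum := by
  obtain ⟨t, rfl⟩ := Multiset.le_iff_exists_add.1 h
  rw [Multiset.sum_add]
  omega

lemma Phi_split (base : ℕ → K) (r : ℕ) (hr : 0 < r) (m a : ℕ) :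
    C (R := ℚ) ((((m + a).choose m : ℕ) : ℚ) / (((m + a).factorial * (2 * r) ^ (m + a) : ℕ) : ℚ))
        * (base r) ^ (m + a)
      = Phi (wGen base) r m * Phi (wGen base) r a := by
  have hfac : ((m + a).choose m * m.factorial * a.factorial : ℕ) = (m + a).factorial := by
    simpa using Nat.choose_mul_factorial_mul_factorial (Nat.le_add_right m a)
  have h2r : ((2 * r : ℕ) : ℚ) ≠ 0 := Nat.cast_ne_zero.2 (by omega)
  have hm : (m.factorial : ℚ) ≠ 0 := Nat.cast_ne_zero.2 m.factorial_ne_zero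
  have ha : (a.factorial : ℚ) ≠ 0 := Nat.cast_ne_zero.2 a.factorial_ne_zero
  have hsc : (((m + a).choose m : ℕ) : ℚ) / (((m + a).factorial * (2 * r) ^ (m + a) : ℕ) : ℚ)
      = ((m.factorial : ℚ)⁻¹ * (((2 * r : ℕ) : ℚ))⁻¹ ^ m)
        * ((a.factorial : ℚ)⁻¹ * (((2 * r : ℕ) : ℚ))⁻¹ ^ a) := by
    have hfacq : (((m + a).choose m : ℕ) : ℚ) * (m.factorial : ℚ) * (a.factorial : ℚ)
        = ((m + a).factorial : ℚ) := by
      push_cast [← hfac]; ring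
    have hrq : (r : ℚ) ≠ 0 := Nat.cast_ne_zero.2 (by omega)
    rw [div_eq_iff (by positivity)]
    push_cast
    field_simp
    push_cast at hfacq
    have e1 : (r:ℚ)^m * (r:ℚ)⁻¹^m = 1 := by rw [← mul_pow, mul_inv_cancel₀ hrq, one_pow]
    have e2 : (r:ℚ)^a * (r:ℚ)⁻¹^a = 1 := by rw [← mul_pow, mul_inv_cancel₀ hrq, one_pow]
    have e3 : (1/2:ℚ)^m * 2^m = 1 := by rw [← mul_pow]; norm_num
    have e4 : (1/2:ℚ)^a * 2^a = 1 := by rw [← mul_pow]; norm_num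
    set X0 := (((m + a).choose m : ℕ) : ℚ) * (m.factorial : ℚ) * (a.factorial : ℚ)
    linear_combination (-X0 * ((r:ℚ)^a * (r:ℚ)⁻¹^a) * ((1/2:ℚ)^m * 2^m) * ((1/2:ℚ)^a * 2^a)) * e1
      + (-X0 * ((1/2:ℚ)^m * 2^m) * ((1/2:ℚ)^a * 2^a)) * e2 + (-X0 * ((1/2:ℚ)^a * 2^a)) * e3
      + (-X0) * e4
      + ((r:ℚ)^m * (r:ℚ)⁻¹^m * ((r:ℚ)^a * (r:ℚ)⁻¹^a) * ((1/2:ℚ)^m * 2^m) * ((1/2:ℚ)^a * 2^a)) * hfacq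
  rw [hsc, map_mul, map_mul, map_mul, map_pow, map_pow, Phi, Phi, wGen, mul_pow, mul_pow,
    pow_add]
  ring
lemma FGen_eq_mprod (base : ℕ → K) (muP s : Multiset ℕ) (hle : muP ≤ s) :
    FGen base muP s
      = mprod (fun r c =>
          C (R := ℚ) ((c.choose (muP.count r) : ℚ) / ((c.factorial * (2 * r) ^ c : ℕ) : ℚ))
            * base r ^ c) s := by
  have hsub : muP.toFinset ⊆ s.toFinset := by
    intro r hrm
    rw [Multiset.mem_toFinset] at hrm ⊢
    have := Multiset.le_iff_count.1 hle r
    have := Multiset.count_pos.2 hrm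
    exact Multiset.count_pos.1 (by omega)
  have hb : (binomOf s muP : ℚ)
      = ∏ r ∈ s.toFinset, ((s.count r).choose (muP.count r) : ℚ) := by
    rw [binomOf, Finset.prod_subset hsub (fun x _ hx => by
      rw [Multiset.count_eq_zero_of_notMem
        (show x ∉ muP from by simpa [Multiset.mem_toFinset] using hx)]
      exact Nat.choose_zero_right _)]
    push_cast
    rfl
  have hv : (vOf s : ℚ) = ∏ r ∈ s.toFinset, (((s.count r).factorial * (2 * r) ^ (s.count r) : ℕ) : ℚ) := by
    rw [vOf]
    push_cast
    rfl
  rw [FGen, hb, hv, ← Finset.prod_div_distrib, map_prod, ← Finset.prod_mul_distrib]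
  rfl

lemma sum_FGen (base : ℕ → K) (muP : Multiset ℕ) (hmu : ∀ x ∈ muP, 0 < x) (j : ℕ) :
    (∑ ν : Nat.Partition (muP.sum + j), FGen base muP ν.parts)
      = mprod (Phi (wGen base)) muP * tW (wGen base) j := by
  rw [tW, Finset.mul_sum]
  rw [← Finset.sum_filter_of_ne (p := fun ν : Nat.Partition (muP.sum + j) => muP ≤ ν.parts)
    (fun ν _ hne => by
      by_contra h
      exact hne (FGen_eq_zero base h))]
  apply Finset.sum_bij'
    (fun (ν : Nat.Partition (muP.sum + j)) (hν : ν ∈ Finset.univ.filter fun ν => muP ≤ ν.parts) =>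
      (⟨ν.parts - muP,
        fun hi => ν.parts_pos (Multiset.mem_of_le tsub_le_self hi),
        by
          have hle : muP ≤ ν.parts := (Finset.mem_filter.1 hν).2
          have h1 := tsub_add_cancel_of_le hle
          have h2 := congrArg Multiset.sum h1
          rw [Multiset.sum_add, ν.parts_sum] at h2
          omega⟩ : Nat.Partition j))
    (fun (α : Nat.Partition j) _ =>
      (⟨muP + α.parts,
        fun hi => by
          rcases Multiset.mem_add.1 hi with h | h
          · exact hmu _ h
          · exact α.parts_pos h,
        by rw [Multiset.sum_add, α.parts_sum]⟩ : Nat.Partition (muP.sum + j)))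
    (fun ν hν => Finset.mem_univ _)
    (fun α hα => by
      simp only [Finset.mem_filter, Finset.mem_univ, true_and]
      exact Multiset.le_add_right _ _)
    (fun ν hν => by
      apply Nat.Partition.ext
      show muP + (ν.parts - muP) = ν.parts
      rw [add_comm]
      exact tsub_add_cancel_of_le (Finset.mem_filter.1 hν).2)
    (fun α hα => by
      apply Nat.Partition.ext
      show muP + α.parts - muP = α.parts
      exact add_tsub_cancel_left _ _)
    (fun ν hν => by
      have hle : muP ≤ ν.parts := (Finset.mem_filter.1 hν).2
      obtain ⟨t, ht⟩ := Multiset.le_iff_exists_add.1 hle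
      have ht2 : ν.parts - muP = t := by rw [ht]; exact add_tsub_cancel_left _ _
      show FGen base muP ν.parts
        = mprod (Phi (wGen base)) muP * mprod (Phi (wGen base)) (ν.parts - muP)
      rw [FGen_eq_mprod base muP ν.parts hle, ht2, ht]
      apply mprod_split
      · exact Phi_zero _
      · exact Phi_zero _
      · intro r hrmem
        have hrpos : 0 < r := by
          rw [Multiset.mem_toFinset] at hrmem
          rcases Multiset.mem_add.1 hrmem with h | h
          · exact hmu _ h
          · exact ν.parts_pos (by rw [ht]; exact Multiset.mem_add.2 (Or.inr h))
        exact Phi_split base r hrpos (muP.count r) (t.count r))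
lemma gSer_eq_sum (muP lamP : Multiset ℕ) (n : ℕ) :
    gSer muP lamP n = ∑ k ∈ range (n + 1),
      (∑ ν : Nat.Partition k, FGen uu muP ν.parts)
        * (∑ κ : Nat.Partition (n - k), FGen vv lamP κ.parts) := by
  rw [gSer]
  apply Finset.sum_congr rfl
  intro k _
  rw [Finset.sum_mul_sum]
  apply Finset.sum_congr rfl
  intro ν _
  apply Finset.sum_congr rfl
  intro κ _
  have hfm : facMinus ν.parts = ∏ r ∈ ν.parts.toFinset, uu r ^ (ν.parts.count r) := rfl
  have hfp : facPlus κ.parts = ∏ r ∈ κ.parts.toFinset, vv r ^ (κ.parts.count r) := rfl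
  rw [← div_mul_div_comm, map_mul, hfm, hfp, FGen, FGen]
  ring

lemma sum_FGen_zero (base : ℕ → K) (muP : Multiset ℕ) (k : ℕ) (hk : k < muP.sum) :
    (∑ ν : Nat.Partition k, FGen base muP ν.parts) = 0 := by
  apply Finset.sum_eq_zero
  intro ν _
  apply FGen_eq_zero
  intro hle
  have := mul_sum_le hle
  rw [ν.parts_sum] at this
  omega

lemma gSer_formula (muP lamP : Multiset ℕ) (hmu : ∀ x ∈ muP, 0 < x)
    (hlam : ∀ x ∈ lamP, 0 < x) (M : ℕ) :
    gSer muP lamP (muP.sum + lamP.sum + M)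
      = (mprod (Phi wU) muP * mprod (Phi wV) lamP) * HH M := by
  have hwu : wGen uu = wU := rfl
  have hwv : wGen vv = wV := rfl
  set A := muP.sum with hA
  set B := lamP.sum with hB
  set n := A + B + M with hn
  rw [gSer_eq_sum]
  have hsub : Icc A (A + M) ⊆ range (n + 1) := by
    intro x hx; simp only [mem_Icc] at hx; simp only [mem_range]; omega
  rw [← Finset.sum_subset hsub (fun k hk hk2 => by
    simp only [mem_range] at hk
    simp only [mem_Icc] at hk2
    rcases Nat.lt_or_ge k A with h | h
    · rw [sum_FGen_zero uu muP k (by omega), zero_mul]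
    · have h2 : n - k < B := by omega
      rw [sum_FGen_zero vv lamP (n - k) (by omega), mul_zero])]
  have reindex : ∑ k ∈ Icc A (A + M),
      (∑ ν : Nat.Partition k, FGen uu muP ν.parts)
        * (∑ κ : Nat.Partition (n - k), FGen vv lamP κ.parts)
      = ∑ j ∈ range (M + 1),
        (∑ ν : Nat.Partition (A + j), FGen uu muP ν.parts)
          * (∑ κ : Nat.Partition (B + (M - j)), FGen vv lamP κ.parts) := by
    apply Finset.sum_nbij' (fun k => k - A) (fun j => A + j)
    · intro a ha; simp only [mem_Icc] at ha; simp only [mem_range]; omega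
    · intro a ha; simp only [mem_range] at ha; simp only [mem_Icc]; omega
    · intro a ha; simp only [mem_Icc] at ha; show A + (a - A) = a; omega
    · intro a ha; simp only [mem_range] at ha; show A + a - A = a; omega
    · intro a ha
      simp only [mem_Icc] at ha
      have e1 : a = A + (a - A) := by omega
      have e2 : n - a = B + (M - (a - A)) := by omega
      rw [e2]
      congr 1
      conv_lhs => rw [e1]
  rw [reindex]
  have hterm : ∀ j ∈ range (M + 1),
      (∑ ν : Nat.Partition (A + j), FGen uu muP ν.parts)
        * (∑ κ : Nat.Partition (B + (M - j)), FGen vv lamP κ.parts)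
      = (mprod (Phi wU) muP * mprod (Phi wV) lamP) * (tW wU j * tW wV (M - j)) := by
    intro j _
    rw [show (A + j) = muP.sum + j from rfl, show (B + (M - j)) = lamP.sum + (M - j) from rfl,
      sum_FGen uu muP hmu j, sum_FGen vv lamP hlam (M - j), hwu, hwv]
    ring
  rw [Finset.sum_congr rfl hterm, ← Finset.mul_sum, ← SS]
  rw [SS_eq_HH]

lemma gSer_formula' (muP lamP : Multiset ℕ) (hmu : ∀ x ∈ muP, 0 < x)
    (hlam : ∀ x ∈ lamP, 0 < x) (n : ℕ) (hn : muP.sum + lamP.sum ≤ n) :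
    gSer muP lamP n
      = (mprod (Phi wU) muP * mprod (Phi wV) lamP) * HH (n - muP.sum - lamP.sum) := by
  have e : n = muP.sum + lamP.sum + (n - muP.sum - lamP.sum) := by omega
  conv_lhs => rw [e]
  exact gSer_formula muP lamP hmu hlam _

lemma coeff_kill (f : K) (i m : ℕ) (h : i < m) :
    (PowerSeries.coeff (R := ℚ) i) (f * (1 - (X : K) ^ m)) = PowerSeries.coeff (R := ℚ) i f := by
  rw [mul_sub, mul_one, map_sub, PowerSeries.coeff_mul_X_pow' f m i, if_neg (by omega)]
  ring

end

end StabAux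


open StabAux

/-- **Corollary 1.9 (twisted homological stability)**: for a double partition `(μ,λ)`,
with `|μ| = A` and `|λ| = B`, the twisted Betti numbers satisfy `β_i(n) = β_i(n+1)`
whenever `n ≥ |μ| + |λ| + i`. -/
theorem twisted_homological_stability (A B : ℕ) (mu : Nat.Partition A)
    (lam : Nat.Partition B) (i n : ℕ) (hn : A + B + i ≤ n) :
    betaC mu.parts lam.parts i n = betaC mu.parts lam.parts i (n + 1) := by
  classical
  set muP := mu.parts with hmuP
  set lamP := lam.parts with hlamP
  have hA : muP.sum = A := mu.parts_sum
  have hB : lamP.sum = B := lam.parts_sum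
  have hmu : ∀ x ∈ muP, 0 < x := fun x hx => mu.parts_pos hx
  have hlam : ∀ x ∈ lamP, 0 < x := fun x hx => lam.parts_pos hx
  set m0 := n + 1 - A - B with hm0
  have euler : gSer muP lamP (n + 1) * (1 - (X : K) ^ (2 * m0)) = gSer muP lamP n := by
    rw [gSer_formula' muP lamP hmu hlam (n + 1) (by omega),
      gSer_formula' muP lamP hmu hlam n (by omega)]
    have e1 : n + 1 - muP.sum - lamP.sum = (n - A - B) + 1 := by omega
    have e2 : n - muP.sum - lamP.sum = n - A - B := by omega
    have e3 : m0 = (n - A - B) + 1 := by omega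
    rw [e1, e2, e3]
    linear_combination (mprod (Phi wU) muP * mprod (Phi wV) lamP) * HH_pred (n - A - B)
  simp only [betaC]
  by_cases hAB : A + B = 0
  · have hm0n : m0 = n + 1 := by omega
    have herase : Icc 1 (n + 1) = insert (n + 1) (Icc 1 n) := by
      ext x; simp only [mem_Icc, mem_insert]; omega
    have hsplit : (∏ k ∈ Icc 1 (n + 1), (1 - (X : K) ^ (2 * k)))
        = (1 - (X : K) ^ (2 * m0)) * ∏ k ∈ Icc 1 n, (1 - (X : K) ^ (2 * k)) := by
      rw [herase, Finset.prod_insert (by simp only [mem_Icc]; omega), hm0n]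
    rw [hsplit, show gSer muP lamP (n + 1)
        * ((1 - (X : K) ^ (2 * m0)) * ∏ k ∈ Icc 1 n, (1 - (X : K) ^ (2 * k)))
      = (gSer muP lamP (n + 1) * (1 - (X : K) ^ (2 * m0)))
          * ∏ k ∈ Icc 1 n, (1 - (X : K) ^ (2 * k)) from by ring, euler]
  · have hm0le : m0 ∈ Icc 1 n := by simp only [mem_Icc]; omega
    set E := ∏ k ∈ (Icc 1 n).erase m0, (1 - (X : K) ^ (2 * k)) with hE
    have hPn : (∏ k ∈ Icc 1 n, (1 - (X : K) ^ (2 * k)))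
        = (1 - (X : K) ^ (2 * m0)) * E := (Finset.mul_prod_erase _ _ hm0le).symm
    have hPn1 : (∏ k ∈ Icc 1 (n + 1), (1 - (X : K) ^ (2 * k)))
        = ((1 - (X : K) ^ (2 * m0)) * E) * (1 - (X : K) ^ (2 * (n + 1))) := by
      rw [Finset.prod_Icc_succ_top (by omega), hPn]
    rw [hPn, hPn1]
    rw [show gSer muP lamP (n + 1)
        * (((1 - (X : K) ^ (2 * m0)) * E) * (1 - (X : K) ^ (2 * (n + 1))))
      = ((gSer muP lamP (n + 1) * (1 - (X : K) ^ (2 * m0))) * E)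
          * (1 - (X : K) ^ (2 * (n + 1))) from by ring, euler]
    rw [coeff_kill _ i _ (by omega)]
    rw [show gSer muP lamP n * ((1 - (X : K) ^ (2 * m0)) * E)
      = (gSer muP lamP n * E) * (1 - (X : K) ^ (2 * m0)) from by ring]
    rw [coeff_kill _ i _ (by omega)]
end
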